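/- arXiv:1011.0827 — 5 statements merged into one kernel-verified Lean document; each statement's English description precedes it below -/
import Mathlib

section
/- Let Γ be a finite Abelian group and S ⊆ Γ\{1} an inverse-closed generating set. Then rc(C(Γ,S)) ≤ min over minimal generating sets S* ⊆ S of Γ of the sum over a ∈ S* of ⌈|a|/2⌉, where |a| denotes the order of a. -/
open SimpleGraph Finset

/-- An edge-coloring with colors `< k` such that every two vertices are joined by a
path whose edge colors are pairwise distinct. -/
def RainbowConnected {V : Type*} (G : SimpleGraph V) (k : ℕ) : Prop :=
  ∃ c : Sym2 V → ℕ, (∀ e ∈ G.edgeSet, c e < k) ∧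
    ∀ u v : V, ∃ p : G.Walk u v, p.IsPath ∧ (p.edges.map c).Nodup

/-- As above, but the rainbow path must be a geodesic. -/
def StrongRainbowConnected {V : Type*} (G : SimpleGraph V) (k : ℕ) : Prop :=
  ∃ c : Sym2 V → ℕ, (∀ e ∈ G.edgeSet, c e < k) ∧
    ∀ u v : V, ∃ p : G.Walk u v, p.IsPath ∧ p.length = G.dist u v ∧ (p.edges.map c).Nodup

/-- The rainbow connection number. -/
noncomputable def rc {V : Type*} (G : SimpleGraph V) : ℕ := sInf {k | RainbowConnected G k}

/-- The strong rainbow connection number. -/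
noncomputable def src {V : Type*} (G : SimpleGraph V) : ℕ := sInf {k | StrongRainbowConnected G k}
/-- The Cayley graph of a group `Γ` with connection set `S`: `x ~ y` iff `x * y⁻¹ ∈ S`
(symmetrized; for `S` inverse-closed with `1 ∉ S` this is the usual Cayley graph). -/
def cayley {Γ : Type*} [Group Γ] (S : Set Γ) : SimpleGraph Γ :=
  SimpleGraph.fromRel (fun x y => x * y⁻¹ ∈ S)

namespace RcAux

variable {Γ : Type*} [CommGroup Γ] [Fintype Γ]

/-- ceiling of half the order -/
noncomputable def mm (a : Γ) : ℕ := (orderOf a + 1) / 2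

lemma mm_pos (a : Γ) : 0 < mm a := by
  have := orderOf_pos a; unfold mm; omega

noncomputable def rep (a x : Γ) : Γ :=
  (QuotientGroup.mk (s := Subgroup.zpowers a) x).out

lemma rep_spec (a x : Γ) : ∃ k : ℤ, a ^ k = (rep a x)⁻¹ * x := by
  have h : (QuotientGroup.mk (s := Subgroup.zpowers a) (rep a x))
      = QuotientGroup.mk (s := Subgroup.zpowers a) x :=
    QuotientGroup.out_eq' _
  exact Subgroup.mem_zpowers_iff.mp (QuotientGroup.eq.mp h)

noncomputable def pos (a x : Γ) : ZMod (orderOf a) :=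
  ((rep_spec a x).choose : ZMod (orderOf a))

lemma pos_spec (a x : Γ) : rep a x * a ^ (pos a x).val = x := by
  haveI : NeZero (orderOf a) := ⟨(orderOf_pos a).ne'⟩
  have hk := (rep_spec a x).choose_spec
  have h1 : (((rep_spec a x).choose : ZMod (orderOf a)).val : ℤ)
      = (rep_spec a x).choose % (orderOf a) := ZMod.val_intCast _
  have h2 : a ^ (((rep_spec a x).choose : ZMod (orderOf a)).val : ℤ)
      = a ^ (rep_spec a x).choose := by
    rw [h1, zpow_eq_zpow_iff_modEq]
    exact Int.emod_emod_of_dvd _ dvd_rfl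
  have : a ^ (pos a x).val = (rep a x)⁻¹ * x := by
    rw [← hk, ← h2, zpow_natCast]; rfl
  rw [this, mul_inv_cancel_left]

lemma rep_mul (a x : Γ) : rep a (x * a) = rep a x := by
  unfold rep
  congr 1
  apply Eq.symm
  rw [QuotientGroup.eq]
  simpa using Subgroup.mem_zpowers a

lemma pos_mul (a x : Γ) : pos a (x * a) = pos a x + 1 := by
  haveI : NeZero (orderOf a) := ⟨(orderOf_pos a).ne'⟩
  have h1 := pos_spec a (x * a)
  have h2 := pos_spec a x
  rw [rep_mul] at h1
  have h3 : rep a x * a ^ (pos a (x * a)).val = rep a x * a ^ ((pos a x).val + 1) := by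
    rw [h1, pow_succ, ← mul_assoc, h2]
  have h4 : a ^ (pos a (x * a)).val = a ^ ((pos a x).val + 1) := mul_left_cancel h3
  have h5 : (pos a (x * a)).val ≡ (pos a x).val + 1 [MOD orderOf a] :=
    pow_eq_pow_iff_modEq.mp h4
  have h6 : ((pos a (x * a)).val : ZMod (orderOf a)) = (((pos a x).val + 1 : ℕ) : ZMod (orderOf a)) :=
    (ZMod.natCast_eq_natCast_iff _ _ _).mpr h5
  rwa [ZMod.natCast_rightInverse _, Nat.cast_add, Nat.cast_one,
    ZMod.natCast_rightInverse _] at h6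

lemma pos_pow (a x : Γ) (i : ℕ) : pos a (x * a ^ i) = pos a x + i := by
  induction i with
  | zero => simp
  | succ i ih =>
    have h : x * a ^ (i + 1) = (x * a ^ i) * a := by rw [pow_succ, mul_assoc]
    rw [h, pos_mul, ih]
    push_cast
    ring

lemma pos_inv_pow (a x : Γ) (i : ℕ) : pos a (x * a⁻¹ ^ i) = pos a x - i := by
  have h := pos_pow a (x * a⁻¹ ^ i) i
  have h2 : x * a⁻¹ ^ i * a ^ i = x := by
    rw [mul_assoc, inv_pow, inv_mul_cancel, mul_one]
  rw [h2] at h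
  rw [eq_sub_iff_add_eq, ← h]

noncomputable def labelZ (a : Γ) (p : ZMod (orderOf a)) : ℕ :=
  if p.val < mm a then p.val else p.val - mm a

lemma labelZ_lt (a : Γ) (p : ZMod (orderOf a)) : labelZ a p < mm a := by
  haveI : NeZero (orderOf a) := ⟨(orderOf_pos a).ne'⟩
  have hu : p.val < orderOf a := ZMod.val_lt p
  have h1 : orderOf a ≤ 2 * mm a := by unfold mm; omega
  have h0 := mm_pos a
  unfold labelZ; split_ifs <;> omega

private lemma labelFn_ne {n m u v d : ℕ} (hm1 : n ≤ 2 * m) (hu : u < n)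
    (hd : 0 < d) (hdn : d < n - m) (hv : v = (u + d) % n) :
    (if u < m then u else u - m) ≠ (if v < m then v else v - m) := by
  have hcase : (u + d < n ∧ v = u + d) ∨ (n ≤ u + d ∧ v = u + d - n) := by
    rcases Nat.lt_or_ge (u + d) n with h' | h'
    · exact Or.inl ⟨h', by rw [hv, Nat.mod_eq_of_lt h']⟩
    · exact Or.inr ⟨h', by rw [hv, Nat.mod_eq_sub_mod h', Nat.mod_eq_of_lt (by omega)]⟩
  split_ifs <;> omega

lemma labelZ_ne (a : Γ) (p : ZMod (orderOf a)) {d : ℕ} (hd : 0 < d)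
    (hdn : d < orderOf a - mm a) :
    labelZ a p ≠ labelZ a (p + (d : ZMod (orderOf a))) := by
  haveI : NeZero (orderOf a) := ⟨(orderOf_pos a).ne'⟩
  have hnpos : 0 < orderOf a := orderOf_pos a
  have hm1 : orderOf a ≤ 2 * mm a := by unfold mm; omega
  have hu : p.val < orderOf a := ZMod.val_lt p
  have hdlt : d < orderOf a := by omega
  have hv : (p + (d : ZMod (orderOf a))).val = (p.val + d) % orderOf a := by
    rw [ZMod.val_add, ZMod.val_natCast, Nat.mod_eq_of_lt hdlt]
  exact labelFn_ne hm1 hu hd hdn hv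

noncomputable def colorV (a x : Γ) : ℕ := labelZ a (pos a x)

lemma colorV_lt (a x : Γ) : colorV a x < mm a := labelZ_lt a (pos a x)

lemma colorV_of_order_two {a : Γ} (h : orderOf a = 2) (x : Γ) : colorV a x = 0 := by
  haveI : NeZero (orderOf a) := ⟨(orderOf_pos a).ne'⟩
  have hv : (pos a x).val < orderOf a := ZMod.val_lt _
  have hm : mm a = 1 := by unfold mm; rw [h]
  unfold colorV labelZ
  rw [hm]
  split_ifs <;> omega

/-- `e` is an edge generated by `a`. -/
def IsA (a : Γ) (e : Sym2 Γ) : Prop := ∃ u : Γ, e = s(u, u * a)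

open scoped Classical in
noncomputable def cA (a : Γ) (e : Sym2 Γ) : ℕ :=
  if h : IsA a e then colorV a h.choose else 0

lemma cA_lt (a : Γ) (e : Sym2 Γ) : cA a e < mm a := by
  unfold cA
  split
  · exact colorV_lt _ _
  · exact mm_pos a

lemma cA_eq {a : Γ} (ha1 : a ≠ 1) (u : Γ) : cA a s(u, u * a) = colorV a u := by
  have hA : IsA a s(u, u * a) := ⟨u, rfl⟩
  unfold cA
  rw [dif_pos hA]
  have hw := hA.choose_spec
  rcases Sym2.eq_iff.mp hw with ⟨h1, _⟩ | ⟨h1, h2⟩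
  · exact congrArg (colorV a) h1.symm
  · have h3 : u * a * a = u := by rw [h2, ← h1]
    have ha2 : a * a = 1 := by
      have h4 : u * (a * a) = u * 1 := by rw [mul_one, ← mul_assoc]; exact h3
      exact mul_left_cancel h4
    have hord : orderOf a = 2 := by
      have hdvd : orderOf a ∣ 2 := orderOf_dvd_of_pow_eq_one (by rw [pow_two]; exact ha2)
      have hle : orderOf a ≤ 2 := Nat.le_of_dvd (by norm_num) hdvd
      have h1' : orderOf a ≠ 1 := fun hh => ha1 (orderOf_eq_one_iff.mp hh)
      have := orderOf_pos a
      omega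
    rw [colorV_of_order_two hord, colorV_of_order_two hord]

lemma adj_cayley {S : Finset Γ} {a : Γ} (ha1 : a ≠ 1) (hainv : a⁻¹ ∈ S) (x : Γ) :
    (cayley (S : Set Γ)).Adj x (x * a) := by
  rw [cayley, fromRel_adj]
  constructor
  · intro h
    exact ha1 (left_eq_mul.mp h)
  · left
    have h : x * (x * a)⁻¹ = a⁻¹ := by
      rw [mul_inv_rev, ← mul_assoc, mul_comm x a⁻¹, mul_assoc, mul_inv_cancel, mul_one]
    rw [h]
    exact_mod_cast hainv

lemma segment_walk (S : Finset Γ) (a : Γ) (ha1 : a ≠ 1) (hainv : a⁻¹ ∈ S) :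
    ∀ (t : ℕ) (x : Γ), ∃ w : (cayley (S : Set Γ)).Walk x (x * a ^ t),
      w.edges = (List.range t).map (fun i => s(x * a ^ i, x * a ^ i * a)) := by
  intro t
  induction t with
  | zero =>
    intro x
    exact ⟨(Walk.nil).copy rfl (by rw [pow_zero, mul_one]), by simp⟩
  | succ t ih =>
    intro x
    obtain ⟨w, hw⟩ := ih (x * a)
    refine ⟨((Walk.cons (adj_cayley ha1 hainv x) w).copy rfl
      (by rw [pow_succ', ← mul_assoc])), ?_⟩
    rw [Walk.edges_copy, Walk.edges_cons, hw, List.range_succ_eq_map, List.map_cons,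
      List.map_map]
    congr 1
    · simp
    · apply List.map_congr_left
      intro i _
      simp only [Function.comp_apply]
      rw [pow_succ', ← mul_assoc]
end RcAux

open RcAux

/-- Upper bound on rc of a Cayley graph of an Abelian group: for every minimal
generating subset T of S, rc(C(Γ,S)) ≤ Σ_{a ∈ T} ⌈|a|/2⌉. -/
theorem rc_cayley_le {Γ : Type*} [CommGroup Γ] [Fintype Γ] (S : Finset Γ)
    (h1 : (1 : Γ) ∉ S) (hinv : ∀ s ∈ S, s⁻¹ ∈ S)
    (hgen : Subgroup.closure (S : Set Γ) = ⊤)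
    (T : Finset Γ) (hTS : T ⊆ S)
    (hTgen : Subgroup.closure (T : Set Γ) = ⊤)
    (hTmin : ∀ T' ⊂ T, Subgroup.closure ((T' : Finset Γ) : Set Γ) ≠ ⊤) :
    rc (cayley (S : Set Γ)) ≤ ∑ a ∈ T, (orderOf a + 1) / 2 := by
  classical
  set G := cayley (S : Set Γ) with hG
  have hT1 : ∀ a ∈ T, a ≠ 1 := fun a ha h => h1 (h ▸ hTS ha)
  have hTinv : ∀ a ∈ T, a⁻¹ ∈ S := fun a ha => hinv a (hTS ha)
  have hKmm : ∑ a ∈ T, (orderOf a + 1) / 2 = ∑ a ∈ T, mm a := rfl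
  set K := ∑ a ∈ T, mm a with hK
  -- uniqueness of the generator attached to an edge
  have huniq : ∀ a ∈ T, ∀ b ∈ T, ∀ e : Sym2 Γ, IsA a e → IsA b e → a = b := by
    intro a ha b hb e hae hbe
    obtain ⟨u, hu⟩ := hae
    obtain ⟨v, hv⟩ := hbe
    rw [hu] at hv
    rcases Sym2.eq_iff.mp hv with ⟨h1', h2'⟩ | ⟨h1', h2'⟩
    · subst h1'; exact mul_left_cancel h2'
    · by_contra hab
      have hmul : a * b = 1 := by
        have h3 : u * (a * b) = u * 1 := by
          rw [mul_one, ← mul_assoc, h2', ← h1']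
        exact mul_left_cancel h3
      have hba : b = a⁻¹ := by
        rw [← inv_eq_of_mul_eq_one_right hmul]
      have hsub : (T : Set Γ) ⊆ ↑(Subgroup.closure ((T.erase b : Finset Γ) : Set Γ)) := by
        set M := Subgroup.closure ((T.erase b : Finset Γ) : Set Γ) with hM
        intro x hx
        rcases eq_or_ne x b with hxb | hxb
        · have haT' : a ∈ T.erase b := Finset.mem_erase.mpr ⟨fun h => hab h, ha⟩
          have hamem : a ∈ M := Subgroup.subset_closure (by exact_mod_cast haT')
          rw [hxb, hba]
          exact inv_mem hamem
        · exact Subgroup.subset_closure (by exact_mod_cast Finset.mem_erase.mpr ⟨hxb, hx⟩)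
      have htop : Subgroup.closure ((T.erase b : Finset Γ) : Set Γ) = ⊤ := by
        have hle : Subgroup.closure (T : Set Γ) ≤
            Subgroup.closure ((T.erase b : Finset Γ) : Set Γ) :=
          (Subgroup.closure_le _).mpr hsub
        rw [hTgen] at hle
        exact top_unique hle
      exact hTmin _ (Finset.erase_ssubset hb) htop
  -- offsets
  set ρ : Γ → ℕ := fun x => ((Fintype.equivFin Γ) x : ℕ) with hρdef
  have hρ : Function.Injective ρ := fun x y h =>
    (Fintype.equivFin Γ).injective (Fin.val_injective h)
  set off : Γ → ℕ := fun a => ∑ b ∈ T.filter (fun b => ρ b < ρ a), mm b with hoff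
  have hoff_mono : ∀ a ∈ T, ∀ b, ρ a < ρ b → off a + mm a ≤ off b := by
    intro a ha b hab
    have hsub : insert a (T.filter (fun x => ρ x < ρ a)) ⊆ T.filter (fun x => ρ x < ρ b) := by
      intro x hx
      rcases Finset.mem_insert.mp hx with rfl | hx
      · exact Finset.mem_filter.mpr ⟨ha, hab⟩
      · obtain ⟨hxT, hxa⟩ := Finset.mem_filter.mp hx
        exact Finset.mem_filter.mpr ⟨hxT, lt_trans hxa hab⟩
    have hnm : a ∉ T.filter (fun x => ρ x < ρ a) := by
      simp [Finset.mem_filter]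
    calc off a + mm a = ∑ x ∈ insert a (T.filter (fun x => ρ x < ρ a)), mm x := by
          rw [Finset.sum_insert hnm]; ring
      _ ≤ off b := Finset.sum_le_sum_of_subset hsub
  have hoff_le : ∀ a ∈ T, off a + mm a ≤ K := by
    intro a ha
    have hsub : insert a (T.filter (fun x => ρ x < ρ a)) ⊆ T := by
      intro x hx
      rcases Finset.mem_insert.mp hx with rfl | hx
      · exact ha
      · exact (Finset.mem_filter.mp hx).1
    have hnm : a ∉ T.filter (fun x => ρ x < ρ a) := by
      simp [Finset.mem_filter]
    calc off a + mm a = ∑ x ∈ insert a (T.filter (fun x => ρ x < ρ a)), mm x := by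
          rw [Finset.sum_insert hnm]; ring
      _ ≤ K := Finset.sum_le_sum_of_subset hsub
  have hoff_dis : ∀ a ∈ T, ∀ b ∈ T, a ≠ b → ∀ q : ℕ,
      off a ≤ q → q < off a + mm a → off b ≤ q → q < off b + mm b → False := by
    intro a ha b hb hab q h1' h2' h3' h4'
    rcases lt_trichotomy (ρ a) (ρ b) with h | h | h
    · have := hoff_mono a ha b h; omega
    · exact hab (hρ h)
    · have := hoff_mono b hb a h; omega
  -- the coloring
  set c : Sym2 Γ → ℕ := fun e =>
    if h : ∃ a, a ∈ T ∧ IsA a e then off h.choose + cA h.choose e else 0 with hc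
  have hc_eq : ∀ a ∈ T, ∀ u : Γ, c s(u, u * a) = off a + colorV a u := by
    intro a ha u
    have hex : ∃ b, b ∈ T ∧ IsA b s(u, u * a) := ⟨a, ha, u, rfl⟩
    rw [hc]
    simp only
    rw [dif_pos hex]
    obtain ⟨hbT, hbA⟩ := hex.choose_spec
    have hba : hex.choose = a := huniq _ hbT _ ha _ hbA ⟨u, rfl⟩
    rw [hba, cA_eq (hT1 a ha) u]
  -- forward segments
  have segF : ∀ a ∈ T, ∀ t : ℕ, t ≤ orderOf a - mm a → ∀ x : Γ,
      ∃ w : G.Walk x (x * a ^ t), (w.edges.map c).Nodup ∧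
        ∀ q ∈ w.edges.map c, off a ≤ q ∧ q < off a + mm a := by
    intro a ha t ht x
    obtain ⟨w, hw⟩ := segment_walk S a (hT1 a ha) (hTinv a ha) t x
    have hcol : w.edges.map c = (List.range t).map
        (fun i : ℕ => off a + labelZ a (pos a x + (i : ZMod (orderOf a)))) := by
      rw [hw, List.map_map]
      apply List.map_congr_left
      intro i _
      simp only [Function.comp_apply]
      rw [hc_eq a ha (x * a ^ i)]
      unfold colorV
      rw [pos_pow]
    have key : ∀ i j : ℕ, i < j → j < t →
        off a + labelZ a (pos a x + (i : ZMod (orderOf a)))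
          ≠ off a + labelZ a (pos a x + (j : ZMod (orderOf a))) := by
      intro i j hlt hjt hEq
      have hEq' : labelZ a (pos a x + (i : ZMod (orderOf a)))
          = labelZ a (pos a x + (j : ZMod (orderOf a))) := Nat.add_left_cancel hEq
      have hco : (pos a x + (j : ZMod (orderOf a)))
          = (pos a x + (i : ZMod (orderOf a))) + ((j - i : ℕ) : ZMod (orderOf a)) := by
        rw [add_assoc, ← Nat.cast_add, Nat.add_sub_cancel' hlt.le]
      exact labelZ_ne a (pos a x + (i : ZMod (orderOf a))) (d := j - i)
        (by omega) (by omega) (by rw [← hco]; exact hEq')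
    refine ⟨w, ?_, ?_⟩
    · rw [hcol]
      refine List.Nodup.map_on ?_ List.nodup_range
      intro i hi j hj hij
      rw [List.mem_range] at hi hj
      rcases Nat.lt_trichotomy i j with h | h | h
      · exact absurd hij (key i j h hj)
      · exact h
      · exact absurd hij.symm (key j i h hi)
    · rw [hcol]
      intro q hq
      obtain ⟨i, _, rfl⟩ := List.mem_map.mp hq
      have := labelZ_lt a (pos a x + (i : ZMod (orderOf a)))
      omega
  -- backward segments
  have segB : ∀ a ∈ T, ∀ t : ℕ, t ≤ orderOf a - mm a → ∀ x : Γ,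
      ∃ w : G.Walk x (x * a⁻¹ ^ t), (w.edges.map c).Nodup ∧
        ∀ q ∈ w.edges.map c, off a ≤ q ∧ q < off a + mm a := by
    intro a ha t ht x
    have hainv : (a⁻¹)⁻¹ ∈ S := by rw [inv_inv]; exact hTS ha
    obtain ⟨w, hw⟩ := segment_walk S a⁻¹ (inv_ne_one.mpr (hT1 a ha)) hainv t x
    have hedge : ∀ i : ℕ, s(x * a⁻¹ ^ i, x * a⁻¹ ^ i * a⁻¹)
        = s(x * a⁻¹ ^ (i + 1), x * a⁻¹ ^ (i + 1) * a) := by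
      intro i
      refine Sym2.eq_iff.mpr (Or.inr ⟨?_, ?_⟩)
      · rw [pow_succ, mul_assoc, mul_assoc, inv_mul_cancel, mul_one]
      · rw [pow_succ, mul_assoc]
    have hcol : w.edges.map c = (List.range t).map
        (fun i : ℕ => off a + labelZ a (pos a x - ((i + 1 : ℕ) : ZMod (orderOf a)))) := by
      rw [hw, List.map_map]
      apply List.map_congr_left
      intro i _
      simp only [Function.comp_apply]
      rw [hedge i, hc_eq a ha]
      unfold colorV
      rw [pos_inv_pow]
    have key : ∀ i j : ℕ, i < j → j < t →
        off a + labelZ a (pos a x - ((i + 1 : ℕ) : ZMod (orderOf a)))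
          ≠ off a + labelZ a (pos a x - ((j + 1 : ℕ) : ZMod (orderOf a))) := by
      intro i j hlt hjt hEq
      have hEq' : labelZ a (pos a x - ((i + 1 : ℕ) : ZMod (orderOf a)))
          = labelZ a (pos a x - ((j + 1 : ℕ) : ZMod (orderOf a))) := Nat.add_left_cancel hEq
      have hco : pos a x - ((i + 1 : ℕ) : ZMod (orderOf a))
          = (pos a x - ((j + 1 : ℕ) : ZMod (orderOf a))) + ((j - i : ℕ) : ZMod (orderOf a)) := by
        push_cast [Nat.cast_sub hlt.le]
        ring
      exact labelZ_ne a (pos a x - ((j + 1 : ℕ) : ZMod (orderOf a))) (d := j - i)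
        (by omega) (by omega) (by rw [← hco]; exact hEq'.symm)
    refine ⟨w, ?_, ?_⟩
    · rw [hcol]
      refine List.Nodup.map_on ?_ List.nodup_range
      intro i hi j hj hij
      rw [List.mem_range] at hi hj
      rcases Nat.lt_trichotomy i j with h | h | h
      · exact absurd hij (key i j h hj)
      · exact h
      · exact absurd hij.symm (key j i h hi)
    · rw [hcol]
      intro q hq
      obtain ⟨i, _, rfl⟩ := List.mem_map.mp hq
      have := labelZ_lt a (pos a x - ((i + 1 : ℕ) : ZMod (orderOf a)))
      omega
  have hhalf : ∀ a : Γ, orderOf a / 2 = orderOf a - mm a := by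
    intro a; have := orderOf_pos a; unfold mm; omega
  -- segments for integer exponents
  have segZ : ∀ a ∈ T, ∀ e : ℤ, e.natAbs ≤ orderOf a / 2 → ∀ x : Γ,
      ∃ w : G.Walk x (x * a ^ e), (w.edges.map c).Nodup ∧
        ∀ q ∈ w.edges.map c, off a ≤ q ∧ q < off a + mm a := by
    intro a ha e he x
    rcases le_or_gt 0 e with h0 | h0
    · obtain ⟨w, hn, hm⟩ := segF a ha e.toNat (by rw [← hhalf]; omega) x
      have hcast : x * a ^ e.toNat = x * a ^ e := by
        rw [← zpow_natCast, Int.toNat_of_nonneg h0]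
      exact ⟨w.copy rfl hcast, by rw [Walk.edges_copy]; exact hn,
        by rw [Walk.edges_copy]; exact hm⟩
    · obtain ⟨w, hn, hm⟩ := segB a ha e.natAbs (by rw [← hhalf]; omega) x
      have hcast : x * a⁻¹ ^ e.natAbs = x * a ^ e := by
        have he' : e = -(e.natAbs : ℤ) := by omega
        rw [inv_pow, ← zpow_natCast, ← zpow_neg, ← he']
      exact ⟨w.copy rfl hcast, by rw [Walk.edges_copy]; exact hn,
        by rw [Walk.edges_copy]; exact hm⟩
  -- the main walk, by induction over the generating set
  have main : ∀ T' : Finset Γ, T' ⊆ T → ∀ k : Γ → ℤ,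
      (∀ a ∈ T', (k a).natAbs ≤ orderOf a / 2) → ∀ u : Γ,
      ∃ w : G.Walk u (u * ∏ a ∈ T', a ^ k a), (w.edges.map c).Nodup ∧
        ∀ q ∈ w.edges.map c, ∃ b ∈ T', off b ≤ q ∧ q < off b + mm b := by
    intro T'
    induction T' using Finset.induction_on with
    | empty =>
      intro _ k _ u
      exact ⟨Walk.nil.copy rfl (by simp), by rw [Walk.edges_copy]; simp, by rw [Walk.edges_copy]; simp⟩
    | @insert a T' ha ih =>
      intro hsub k hk u
      obtain ⟨w1, h1n, h1m⟩ := segZ a (hsub (Finset.mem_insert_self a T')) (k a)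
        (hk a (Finset.mem_insert_self a T')) u
      obtain ⟨w2, h2n, h2m⟩ := ih (fun b hb => hsub (Finset.mem_insert_of_mem hb)) k
        (fun b hb => hk b (Finset.mem_insert_of_mem hb)) (u * a ^ k a)
      refine ⟨(w1.append w2).copy rfl (by rw [Finset.prod_insert ha, ← mul_assoc]), ?_, ?_⟩
      · rw [Walk.edges_copy, Walk.edges_append, List.map_append, List.nodup_append]
        refine ⟨h1n, h2n, ?_⟩
        rintro q hq1 _ hq2 rfl
        obtain ⟨ha1', ha2'⟩ := h1m q hq1
        obtain ⟨b, hb, hb1, hb2⟩ := h2m q hq2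
        exact hoff_dis a (hsub (Finset.mem_insert_self a T')) b
          (hsub (Finset.mem_insert_of_mem hb)) (fun h => ha (h.symm ▸ hb)) q ha1' ha2' hb1 hb2
      · rw [Walk.edges_copy, Walk.edges_append, List.map_append]
        intro q hq
        rcases List.mem_append.mp hq with hq | hq
        · exact ⟨a, Finset.mem_insert_self a T', h1m q hq⟩
        · obtain ⟨b, hb, hbq⟩ := h2m q hq
          exact ⟨b, Finset.mem_insert_of_mem hb, hbq⟩
  -- every element is a product of powers of the generators
  have hrepr : ∀ g : Γ, ∃ k : Γ → ℤ, g = ∏ a ∈ T, a ^ k a := by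
    intro g
    have hg : g ∈ Subgroup.closure (T : Set Γ) := by rw [hTgen]; exact Subgroup.mem_top g
    refine Subgroup.closure_induction
      (p := fun x _ => ∃ k : Γ → ℤ, x = ∏ a ∈ T, a ^ k a) ?_ ?_ ?_ ?_ hg
    · intro x hx
      refine ⟨fun b => if b = x then 1 else 0, ?_⟩
      have : ∀ a ∈ T, a ^ (if a = x then (1 : ℤ) else 0) = if a = x then a else 1 := by
        intro a _
        split_ifs <;> simp
      rw [Finset.prod_congr rfl this, Finset.prod_ite_eq' T x (fun a => a)]
      rw [if_pos (by exact_mod_cast hx)]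
    · exact ⟨0, by simp⟩
    · rintro x y _ _ ⟨kx, hx⟩ ⟨ky, hy⟩
      refine ⟨fun b => kx b + ky b, ?_⟩
      rw [hx, hy, ← Finset.prod_mul_distrib]
      exact Finset.prod_congr rfl fun a _ => (zpow_add a _ _).symm
    · rintro x _ ⟨kx, hx⟩
      refine ⟨fun b => -kx b, ?_⟩
      rw [hx, ← Finset.prod_inv_distrib]
      exact Finset.prod_congr rfl fun a _ => (zpow_neg a _).symm
  -- reduce exponents to the symmetric range
  have hreduce : ∀ (a : Γ) (kk : ℤ), ∃ k' : ℤ, k'.natAbs ≤ orderOf a / 2 ∧ a ^ k' = a ^ kk := by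
    intro a kk
    have hn : 0 < orderOf a := orderOf_pos a
    have hmod : a ^ (kk % (orderOf a : ℤ)) = a ^ kk := by
      rw [zpow_eq_zpow_iff_modEq]
      exact Int.emod_emod_of_dvd _ dvd_rfl
    have h0 : 0 ≤ kk % (orderOf a : ℤ) := Int.emod_nonneg _ (by exact_mod_cast hn.ne')
    have hlt : kk % (orderOf a : ℤ) < (orderOf a : ℤ) :=
      Int.emod_lt_of_pos _ (by exact_mod_cast hn)
    by_cases hc' : (kk % (orderOf a : ℤ)).toNat ≤ orderOf a / 2
    · exact ⟨kk % (orderOf a : ℤ), by omega, hmod⟩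
    · refine ⟨kk % (orderOf a : ℤ) - (orderOf a : ℤ), by omega, ?_⟩
      rw [zpow_sub, hmod, zpow_natCast, pow_orderOf_eq_one, inv_one, mul_one]
  -- conclude
  have hRC : RainbowConnected G K := by
    refine ⟨c, ?_, ?_⟩
    · intro e he
      rcases Finset.eq_empty_or_nonempty T with rfl | ⟨a0, ha0⟩
      · exfalso
        have hsing : Subsingleton Γ := by
          constructor
          intro x y
          have hbot : (⊥ : Subgroup Γ) = ⊤ := by
            rw [← Subgroup.closure_empty]
            simpa using hTgen
          have hx : x ∈ (⊥ : Subgroup Γ) := by rw [hbot]; exact Subgroup.mem_top x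
          have hy : y ∈ (⊥ : Subgroup Γ) := by rw [hbot]; exact Subgroup.mem_top y
          rw [Subgroup.mem_bot] at hx hy
          rw [hx, hy]
        induction e using Sym2.ind with
        | _ x y =>
          have hadj : G.Adj x y := he
          exact hadj.ne (Subsingleton.elim x y)
      · have hK1 : 0 < K := by
          calc 0 < mm a0 := mm_pos a0
            _ ≤ K := Finset.single_le_sum (fun i _ => Nat.zero_le (mm i)) ha0
        rw [hc]
        simp only
        split
        case isTrue h =>
          obtain ⟨hbT, _⟩ := h.choose_spec
          have h1' : cA h.choose e < mm h.choose := cA_lt _ _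
          have h2' := hoff_le _ hbT
          omega
        case isFalse h => exact hK1
    · intro u v
      obtain ⟨k0, hk0⟩ := hrepr (u⁻¹ * v)
      choose k' hk'1 hk'2 using fun a => hreduce a (k0 a)
      have hprod : (∏ a ∈ T, a ^ k' a) = u⁻¹ * v := by
        rw [hk0]
        exact Finset.prod_congr rfl fun a _ => hk'2 a
      obtain ⟨w, hwn, -⟩ := main T (subset_refl T) k' (fun a _ => hk'1 a) u
      have hend : u * ∏ a ∈ T, a ^ k' a = v := by rw [hprod, mul_inv_cancel_left]
      set w' := w.copy rfl hend with hw'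
      have hwn' : (w'.edges.map c).Nodup := by
        rw [hw', Walk.edges_copy]
        exact hwn
      refine ⟨w'.bypass, Walk.bypass_isPath w', ?_⟩
      have hsub' := Walk.edges_bypass_subset w'
      have hnd : w'.bypass.edges.Nodup := (Walk.bypass_isPath w').isTrail.edges_nodup
      exact hnd.map_on
        (fun e he e' he' hcc => List.inj_on_of_nodup_map hwn' (hsub' he) (hsub' he') hcc)
  rw [hKmm]
  exact Nat.sInf_le hRC
end

section
/- For cycles C_{n₁},...,C_{n_r} with n_k ≥ 2 (interpreting C₂ as the edge P₂), the Cartesian product C_{n₁}□···□C_{n_r} satisfies Σ_k ⌊n_k/2⌋ ≤ rc(C_{n₁}□···□C_{n_r}) ≤ src(C_{n₁}□···□C_{n_r}) ≤ Σ_k ⌈n_k/2⌉. -/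
open SimpleGraph Finset

/-- The Cartesian (box) product of a family of graphs. -/
def boxProdFamily {ι : Type*} {α : ι → Type*} (G : ∀ i, SimpleGraph (α i)) :
    SimpleGraph (∀ i, α i) where
  Adj x y := ∃ i, (G i).Adj (x i) (y i) ∧ ∀ j, j ≠ i → x j = y j
  symm := ⟨fun x y ⟨i, h, hj⟩ => ⟨i, h.symm, fun j hji => (hj j hji).symm⟩⟩
  loopless := ⟨fun x ⟨i, h, _⟩ => (G i).loopless.irrefl _ h⟩

section Aux

lemma mod_mod_ne {N M u t t' : ℕ} (hN : 2 ≤ N) (hM : M = (N+1)/2)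
    (htt : t < t') (ht' : t' < N/2) :
    (u + t) % N % M ≠ (u + t') % N % M := by
  intro hEq
  have hM0 : 0 < M := by omega
  set a := (u + t) % N with ha
  have haN : a < N := Nat.mod_lt _ (by omega)
  set d := t' - t with hd
  have hdM : 0 < d ∧ d < M := by omega
  have hb : (u + t') % N = (a + d) % N := by
    rw [ha, Nat.mod_add_mod]; congr 1; omega
  rw [hb] at hEq
  rcases Nat.lt_or_ge (a + d) N with hlt | hge
  · rw [Nat.mod_eq_of_lt hlt] at hEq
    have hmod : Nat.ModEq M a (a + d) := hEq
    have hdvd : M ∣ a + d - a := (Nat.modEq_iff_dvd' (by omega)).mp hmod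
    rw [show a + d - a = d by omega] at hdvd
    have := Nat.le_of_dvd hdM.1 hdvd
    omega
  · have hb2 : (a + d) % N = a + d - N := by
      rw [Nat.mod_eq_sub_mod hge, Nat.mod_eq_of_lt (by omega)]
    rw [hb2] at hEq
    have hmod : Nat.ModEq M (a + d - N) a := hEq.symm
    have hdvd : M ∣ a - (a + d - N) := (Nat.modEq_iff_dvd' (by omega)).mp hmod
    have heq2 : a - (a + d - N) = N - d := by omega
    rw [heq2] at hdvd
    obtain ⟨kk, hkk⟩ := hdvd
    have h1 : M < N - d := by omega
    have h2 : N - d < 2 * M := by omega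
    match kk, hkk with
    | 0, hkk => omega
    | 1, hkk => omega
    | (kk+2), hkk =>
      have : M * 2 ≤ M * (kk + 2) := Nat.mul_le_mul_left M (by omega)
      omega

section Cycle
open scoped Fin.CommRing
variable {m : ℕ}

lemma min_step (b : Fin (m+2)) :
    min ((b+1) : Fin (m+2)).val ((-(b+1)) : Fin (m+2)).val
      ≤ 1 + min b.val ((-b : Fin (m+2))).val := by
  have hb := b.isLt
  have h1 : ((b+1) : Fin (m+2)).val = (b.val + 1) % (m+2) := by
    rw [Fin.val_add, Fin.val_one]
  have h2 : ((-b) : Fin (m+2)).val = (m + 2 - b.val) % (m+2) := by rw [Fin.neg_def]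
  have h3 : ((-(b+1)) : Fin (m+2)).val = (m + 2 - ((b+1) : Fin (m+2)).val) % (m+2) := by
    rw [Fin.neg_def]
  rcases eq_or_ne b.val (m+1) with h | h
  · rw [h] at h1
    rw [Nat.mod_self] at h1
    omega
  · have e1 : ((b+1) : Fin (m+2)).val = b.val + 1 := by
      rw [h1, Nat.mod_eq_of_lt (by omega)]
    have e3 : ((-(b+1)) : Fin (m+2)).val = m + 1 - b.val := by
      rw [h3, e1, Nat.mod_eq_of_lt (by omega)]; omega
    rcases eq_or_ne b.val 0 with h0 | h0
    · have e2 : ((-b) : Fin (m+2)).val = 0 := by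
        rw [h2, h0]; simp [Nat.mod_self]
      omega
    · have e2 : ((-b) : Fin (m+2)).val = m + 2 - b.val := by
        rw [h2, Nat.mod_eq_of_lt (by omega)]
      omega

lemma cycle_walk_le {u v : Fin (m+2)} (p : (cycleGraph (m+2)).Walk u v) :
    min ((v - u) : Fin (m+2)).val ((u - v) : Fin (m+2)).val ≤ p.length := by
  induction p with
  | nil => simp
  | @cons u w v h q ih =>
    rw [Walk.length_cons]
    rcases cycleGraph_adj.mp h with h1 | h1
    · have hw : u = 1 + w := eq_add_of_sub_eq h1
      subst hw
      have hstep := min_step (m := m) (w - v)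
      have e1 : v - (1 + w) = -((w - v) + 1) := by ring
      have e2 : (1 + w) - v = (w - v) + 1 := by ring
      have e3 : v - w = -(w - v) := by ring
      rw [e1, e2]
      rw [e3] at ih
      omega
    · have hw : w = 1 + u := eq_add_of_sub_eq h1
      subst hw
      have hstep := min_step (m := m) (v - (1 + u))
      have e1 : v - u = (v - (1 + u)) + 1 := by ring
      have e2 : u - v = -((v - (1 + u)) + 1) := by ring
      have e3 : (1 + u) - v = -(v - (1 + u)) := by ring
      rw [e1, e2]
      rw [e3] at ih
      omega

lemma cycle_adj_up (u : Fin (m+2)) : (cycleGraph (m+2)).Adj u (u + 1) :=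
  cycleGraph_adj.mpr (Or.inr (by ring))

def upWalk : (L : ℕ) → (u : Fin (m+2)) → (cycleGraph (m+2)).Walk u (u + L)
  | 0, u => Walk.nil.copy rfl (by simp)
  | L+1, u => (Walk.cons (cycle_adj_up u) (upWalk L (u+1))).copy rfl (by push_cast; ring)

@[simp] lemma upWalk_length (L : ℕ) (u : Fin (m+2)) : (upWalk L u).length = L := by
  induction L generalizing u with
  | zero => simp [upWalk]
  | succ L ih => simp [upWalk, ih]

lemma upWalk_edges (L : ℕ) (u : Fin (m+2)) :
    (upWalk L u).edges
      = (List.range L).map (fun t : ℕ => s(u + (t : Fin (m+2)), u + (t : Fin (m+2)) + 1)) := by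
  induction L generalizing u with
  | zero => simp [upWalk]
  | succ L ih =>
    rw [List.range_succ_eq_map]
    simp only [upWalk, Walk.edges_copy, Walk.edges_cons, ih, List.map_cons, List.map_map]
    congr 1
    · norm_num
    · apply List.map_congr_left
      intro t _
      simp only [Function.comp_apply]
      congr 1 <;> push_cast <;> ring

lemma cycle_dist_eq (u v : Fin (m+2)) :
    (cycleGraph (m+2)).dist u v = min ((v - u) : Fin (m+2)).val ((u - v) : Fin (m+2)).val := by
  apply le_antisymm
  · apply le_min
    · calc (cycleGraph (m+2)).dist u v
          ≤ ((upWalk ((v - u) : Fin (m+2)).val u).copy rfl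
              (by rw [Fin.cast_val_eq_self]; ring)).length := dist_le _
        _ = _ := by simp
    · calc (cycleGraph (m+2)).dist u v
          ≤ (((upWalk ((u - v) : Fin (m+2)).val v).copy rfl
              (by rw [Fin.cast_val_eq_self]; ring)).reverse).length := dist_le _
        _ = _ := by simp
  · obtain ⟨p, hp⟩ :=
      (cycleGraph_connected (n := m+1)).exists_walk_length_eq_dist u v
    rw [← hp]
    exact cycle_walk_le p

lemma cycle_strong (N : ℕ) (hN : 2 ≤ N) :
    ∃ c : Sym2 (Fin N) → ℕ, (∀ e, c e < (N+1)/2) ∧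
      ∀ u v : Fin N, ∃ p : (cycleGraph N).Walk u v,
        p.length = (cycleGraph N).dist u v ∧ ((p.edges.map c).Nodup) := by
  classical
  obtain ⟨m, rfl⟩ : ∃ m, N = m + 2 := ⟨N - 2, by omega⟩
  set M := (m + 2 + 1) / 2 with hM
  have hM0 : 0 < M := by omega
  let f : Fin (m+2) → Fin (m+2) → ℕ := fun a b =>
    if b = a + 1 then a.val % M else if a = b + 1 then b.val % M else 0
  have hf : ∀ a b, f a b = f b a := by
    intro a b
    by_cases h1 : b = a + 1 <;> by_cases h2 : a = b + 1
    · have h3 : a = a + (1 + 1) := by rw [← add_assoc, ← h1]; exact h2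
      have h4 := left_eq_add.mp h3
      have h5 := congrArg Fin.val h4
      rw [Fin.val_add, Fin.val_one, Fin.val_zero] at h5
      rcases Nat.lt_or_ge (1 + 1) (m + 2) with hlt | hge
      · rw [Nat.mod_eq_of_lt hlt] at h5; omega
      · have hm : m = 0 := by omega
        simp only [f, if_pos h1, if_pos h2]
        have hMe : M = 1 := by omega
        simp [hMe, Nat.mod_one]
    · simp only [f]
      rw [if_pos h1, if_neg h2, if_pos h1]
    · simp only [f]
      rw [if_neg h1, if_pos h2, if_pos h2]
    · simp only [f]
      rw [if_neg h1, if_neg h2, if_neg h2, if_neg h1]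
  let c : Sym2 (Fin (m+2)) → ℕ := Sym2.lift ⟨f, hf⟩
  have hc : ∀ e, c e < M := by
    intro e
    induction e using Sym2.ind with
    | _ a b =>
      simp only [c, Sym2.lift_mk, f]
      split_ifs
      exacts [Nat.mod_lt _ hM0, Nat.mod_lt _ hM0, hM0]
  have hnegval : ∀ x : Fin (m+2), ((-x) : Fin (m+2)).val = (m + 2 - x.val) % (m+2) :=
    fun x => by rw [Fin.neg_def]
  have hcolor : ∀ (w : Fin (m+2)) (t : ℕ), t < m + 2 →
      c s(w + (t : Fin (m+2)), w + (t : Fin (m+2)) + 1) = (w.val + t) % (m+2) % M := by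
    intro w t ht
    have h1 : c s(w + (t : Fin (m+2)), w + (t : Fin (m+2)) + 1)
        = (w + (t : Fin (m+2))).val % M := by
      simp only [c, Sym2.lift_mk, f, if_pos rfl, if_true, eq_self_iff_true]
    rw [h1, Fin.val_add, Fin.val_natCast, Nat.mod_eq_of_lt ht]
  have hnodup : ∀ (w : Fin (m+2)) (L : ℕ), L ≤ (m+2)/2 →
      (((upWalk L w).edges.map c).Nodup) := by
    intro w L hL
    rw [upWalk_edges, List.map_map]
    simp only [Function.comp_def]
    rw [List.map_congr_left (fun t ht =>
      hcolor w t (by simp only [List.mem_range] at ht; omega))]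
    refine List.Nodup.map_on ?_ List.nodup_range
    intro t ht t' ht' hEq
    simp only [List.mem_range] at ht ht'
    by_contra hne
    rcases lt_or_gt_of_ne hne with hlt | hlt
    · exact mod_mod_ne (by omega) hM hlt (by omega) hEq
    · exact mod_mod_ne (by omega) hM hlt (by omega) hEq.symm
  refine ⟨c, hc, ?_⟩
  intro u v
  have hvu := ((v - u) : Fin (m+2)).isLt
  have huv := ((u - v) : Fin (m+2)).isLt
  have hsum : u - v = -(v - u) := by ring
  rcases le_total ((v - u) : Fin (m+2)).val ((u - v) : Fin (m+2)).val with hle | hle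
  · have hL : ((v - u) : Fin (m+2)).val ≤ (m+2)/2 := by
      rcases eq_or_ne ((v - u) : Fin (m+2)).val 0 with h0 | h0
      · omega
      · rw [hsum, hnegval, Nat.mod_eq_of_lt (by omega)] at hle
        omega
    refine ⟨(upWalk ((v - u) : Fin (m+2)).val u).copy rfl
      (by rw [Fin.cast_val_eq_self]; ring), ?_, ?_⟩
    · rw [Walk.length_copy, upWalk_length, cycle_dist_eq, min_eq_left hle]
    · rw [Walk.edges_copy]
      exact hnodup u _ hL
  · have hL : ((u - v) : Fin (m+2)).val ≤ (m+2)/2 := by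
      rcases eq_or_ne ((u - v) : Fin (m+2)).val 0 with h0 | h0
      · omega
      · have hvu0 : ((v - u) : Fin (m+2)).val ≠ 0 := by
          intro hz
          have hz' : (v - u : Fin (m+2)) = 0 := by
            apply Fin.ext; simpa using hz
          rw [hz', neg_zero] at hsum
          rw [hsum] at h0
          simp at h0
        rw [hsum, hnegval, Nat.mod_eq_of_lt (by omega)] at hle ⊢
        omega
    refine ⟨((upWalk ((u - v) : Fin (m+2)).val v).copy rfl
      (by rw [Fin.cast_val_eq_self]; ring)).reverse, ?_, ?_⟩
    · rw [Walk.length_reverse, Walk.length_copy, upWalk_length, cycle_dist_eq,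
        min_eq_right hle]
    · rw [Walk.edges_reverse, List.map_reverse, List.nodup_reverse, Walk.edges_copy]
      exact hnodup v _ hL

lemma cycle_antipode (N : ℕ) (hN : 2 ≤ N) :
    N / 2 ≤ (cycleGraph N).dist ⟨0, by omega⟩ ⟨N / 2, by omega⟩ := by
  obtain ⟨m, rfl⟩ : ∃ m, N = m + 2 := ⟨N - 2, by omega⟩
  rw [cycle_dist_eq]
  have hu : (⟨0, by omega⟩ : Fin (m+2)) = 0 := rfl
  rw [hu, sub_zero, zero_sub]
  have h1 : (⟨(m+2)/2, by omega⟩ : Fin (m+2)).val = (m+2)/2 := rfl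
  have h2 : ((-(⟨(m+2)/2, by omega⟩ : Fin (m+2))) : Fin (m+2)).val = (m+2) - (m+2)/2 := by
    rw [Fin.neg_def]
    simp only [h1]
    rw [Nat.mod_eq_of_lt (by omega)]
  omega

end Cycle

section Product
variable {r : ℕ} {α : Fin r → Type*}

lemma boxWalk_le {G : ∀ k, SimpleGraph (α k)} (hG : ∀ k, (G k).Connected)
    {x y : ∀ k, α k} (p : (boxProdFamily G).Walk x y) :
    ∑ k, (G k).dist (x k) (y k) ≤ p.length := by
  induction p with
  | nil => simp [SimpleGraph.dist_self]
  | @cons x w y h q ih =>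
    obtain ⟨i, hi, hoth⟩ := id h
    rw [Walk.length_cons]
    have step : ∀ k, (G k).dist (x k) (y k)
        ≤ (if k = i then 1 else 0) + (G k).dist (w k) (y k) := by
      intro k
      by_cases hk : k = i
      · subst hk
        simp only [eq_self_iff_true, if_true]
        have h1 : (G k).dist (x k) (w k) ≤ 1 := by
          have := dist_le (Walk.cons hi Walk.nil)
          simpa using this
        have h2 := (hG k).dist_triangle (u := x k) (v := w k) (w := y k)
        omega
      · rw [hoth k hk, if_neg hk, zero_add]
    calc ∑ k, (G k).dist (x k) (y k)
        ≤ ∑ k, ((if k = i then 1 else 0) + (G k).dist (w k) (y k)) :=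
          Finset.sum_le_sum fun k _ => step k
      _ = 1 + ∑ k, (G k).dist (w k) (y k) := by
          rw [Finset.sum_add_distrib]
          simp
      _ ≤ q.length + 1 := by omega

lemma offs_disj {mm : Fin r → ℕ} {j k : Fin r} (hjk : j ≠ k) {col : ℕ}
    (h1 : ∑ i ∈ Finset.Iio j, mm i ≤ col) (h2 : col < ∑ i ∈ Finset.Iio j, mm i + mm j)
    (h3 : ∑ i ∈ Finset.Iio k, mm i ≤ col) (h4 : col < ∑ i ∈ Finset.Iio k, mm i + mm k) :
    False := by
  wlog hlt : j < k generalizing j k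
  · exact this hjk.symm h3 h4 h1 h2 ((lt_or_gt_of_ne hjk).resolve_left hlt)
  have key : ∑ i ∈ Finset.Iio j, mm i + mm j ≤ ∑ i ∈ Finset.Iio k, mm i := by
    have h5 : insert j (Finset.Iio j) ⊆ Finset.Iio k := by
      intro a ha
      simp only [Finset.mem_insert, Finset.mem_Iio] at ha ⊢
      rcases ha with rfl | ha
      · exact hlt
      · exact ha.trans hlt
    calc ∑ i ∈ Finset.Iio j, mm i + mm j = ∑ i ∈ insert j (Finset.Iio j), mm i := by
          rw [Finset.sum_insert (by simp)]
          ring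
      _ ≤ _ := Finset.sum_le_sum_of_subset h5
  omega

variable [∀ k, DecidableEq (α k)]

def boxColor (mm : Fin r → ℕ) (c : ∀ k, Sym2 (α k) → ℕ) : Sym2 (∀ k, α k) → ℕ :=
  Sym2.lift ⟨fun a b => ∑ k, if a k ≠ b k then (∑ j ∈ Finset.Iio k, mm j) + c k s(a k, b k) else 0,
    by
      intro a b
      refine Finset.sum_congr rfl fun k _ => ?_
      by_cases h : a k = b k
      · simp [h]
      · rw [if_pos h, if_pos (Ne.symm h), Sym2.eq_swap]⟩

lemma boxColor_eq (mm : Fin r → ℕ) (c : ∀ k, Sym2 (α k) → ℕ) {a b : ∀ k, α k} (i : Fin r)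
    (hne : a i ≠ b i) (hoth : ∀ j, j ≠ i → a j = b j) :
    boxColor mm c s(a, b) = (∑ j ∈ Finset.Iio i, mm j) + c i s(a i, b i) := by
  simp only [boxColor, Sym2.lift_mk]
  rw [Finset.sum_eq_single i]
  · rw [if_pos hne]
  · intro j _ hj
    rw [if_neg (by simpa using hoth j hj)]
  · intro hmem
    exact absurd (Finset.mem_univ i) hmem

lemma boxBuild {G : ∀ k, SimpleGraph (α k)} (mm : Fin r → ℕ)
    (c : ∀ k, Sym2 (α k) → ℕ) (hc : ∀ k e, c k e < mm k)
    (hgeo : ∀ k (u v : α k), ∃ p : (G k).Walk u v,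
      p.length = (G k).dist u v ∧ ((p.edges.map (c k)).Nodup))
    (s : Finset (Fin r)) :
    ∀ x y : ∀ k, α k, (∀ k, k ∉ s → x k = y k) →
      ∃ p : (boxProdFamily G).Walk x y,
        p.length = ∑ k ∈ s, (G k).dist (x k) (y k) ∧
        ((p.edges.map (boxColor mm c)).Nodup) ∧
        ∀ col ∈ p.edges.map (boxColor mm c), ∃ j ∈ s,
          (∑ i ∈ Finset.Iio j, mm i) ≤ col ∧ col < (∑ i ∈ Finset.Iio j, mm i) + mm j := by
  classical
  induction s using Finset.induction_on with
  | empty =>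
    intro x y hxy
    have hxy' : x = y := funext fun k => hxy k (by simp)
    subst hxy'
    exact ⟨Walk.nil, by simp, by simp, by simp⟩
  | @insert k t hkt ih =>
    intro x y hxy
    obtain ⟨q, hqlen, hqnodup⟩ := hgeo k (x k) (y k)
    have Fadj : ∀ {a b : α k}, (G k).Adj a b →
        (boxProdFamily G).Adj (Function.update x k a) (Function.update x k b) := by
      intro a b hab
      exact ⟨k, by simpa using hab, fun j hj => by simp [Function.update_of_ne hj]⟩
    obtain ⟨p', hlen', hnodup', hmem'⟩ := ih (Function.update x k (y k)) y (by
      intro j hj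
      by_cases hjk : j = k
      · subst hjk; simp
      · rw [Function.update_of_ne hjk]
        exact hxy j (by simp [hjk, hj]))
    set F : G k →g boxProdFamily G := ⟨fun u => Function.update x k u, Fadj⟩ with hF
    set q' : (boxProdFamily G).Walk x (Function.update x k (y k)) :=
      (q.map F).copy (Function.update_eq_self k x) rfl with hq'
    have hkey : q'.edges.map (boxColor mm c)
        = (q.edges.map (c k)).map (fun v => (∑ i ∈ Finset.Iio k, mm i) + v) := by
      rw [hq', Walk.edges_copy, Walk.edges_map, List.map_map, List.map_map]
      apply List.map_congr_left
      intro e he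
      have hadj := Walk.edges_subset_edgeSet q he
      clear he
      revert hadj
      induction e using Sym2.ind with
      | _ a b =>
        intro hadj
        rw [SimpleGraph.mem_edgeSet] at hadj
        simp only [Function.comp_apply, Sym2.map_pair_eq]
        rw [show (F a : ∀ k, α k) = Function.update x k a from rfl,
          show (F b : ∀ k, α k) = Function.update x k b from rfl]
        rw [boxColor_eq mm c k (by simpa using hadj.ne)
          (fun j hj => by simp [Function.update_of_ne hj])]
        simp
    refine ⟨q'.append p', ?_, ?_, ?_⟩
    · rw [Walk.length_append, hq', Walk.length_copy, Walk.length_map, hqlen, hlen',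
        Finset.sum_insert hkt]
      congr 1
      apply Finset.sum_congr rfl
      intro j hj
      rw [Function.update_of_ne (by rintro rfl; exact hkt hj)]
    · rw [Walk.edges_append, List.map_append]
      refine List.Nodup.append ?_ hnodup' ?_
      · rw [hkey]
        exact (hqnodup.map (fun a b hab => by omega))
      · intro col h1 h2
        rw [hkey] at h1
        obtain ⟨v, hv, rfl⟩ := List.mem_map.mp h1
        obtain ⟨e, he, rfl⟩ := List.mem_map.mp hv
        obtain ⟨j, hj, hb1, hb2⟩ := hmem' _ h2
        exact offs_disj (by rintro rfl; exact hkt hj) hb1 hb2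
          (Nat.le_add_right _ _) (by have := hc k e; omega)
    · intro col hcol
      rw [Walk.edges_append, List.map_append, List.mem_append] at hcol
      rcases hcol with h1 | h2
      · rw [hkey] at h1
        obtain ⟨v, hv, rfl⟩ := List.mem_map.mp h1
        obtain ⟨e, he, rfl⟩ := List.mem_map.mp hv
        exact ⟨k, Finset.mem_insert_self k t, Nat.le_add_right _ _, by have := hc k e; omega⟩
      · obtain ⟨j, hj, hb1, hb2⟩ := hmem' _ h2
        exact ⟨j, Finset.mem_insert_of_mem hj, hb1, hb2⟩

end Product

end Aux

/-- Bounds on rc and src of a Cartesian product of cycles (with C₂ = P₂). -/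
theorem rc_src_torus_bounds {r : ℕ} (n : Fin r → ℕ) (h : ∀ k, 2 ≤ n k) :
    (∑ k, n k / 2) ≤ rc (boxProdFamily fun k => SimpleGraph.cycleGraph (n k)) ∧
    rc (boxProdFamily fun k => SimpleGraph.cycleGraph (n k)) ≤
      src (boxProdFamily fun k => SimpleGraph.cycleGraph (n k)) ∧
    src (boxProdFamily fun k => SimpleGraph.cycleGraph (n k)) ≤ ∑ k, (n k + 1) / 2 := by
  classical
  have hconn : ∀ k, (cycleGraph (n k)).Connected := by
    intro k
    obtain ⟨m, hm⟩ : ∃ m, n k = m + 1 := ⟨n k - 1, by have := h k; omega⟩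
    rw [hm]
    exact cycleGraph_connected
  choose c hc hgeo using fun k => cycle_strong (n k) (h k)
  set mm : Fin r → ℕ := fun k => (n k + 1) / 2 with hmm
  have hSRC : StrongRainbowConnected (boxProdFamily fun k => cycleGraph (n k)) (∑ k, mm k) := by
    refine ⟨boxColor mm c, ?_, ?_⟩
    · intro e
      induction e using Sym2.ind with
      | _ a b =>
        intro he
        rw [SimpleGraph.mem_edgeSet] at he
        obtain ⟨i, hi, hoth⟩ := he
        rw [boxColor_eq mm c i hi.ne hoth]
        have h1 : c i s(a i, b i) < mm i := hc i _
        have h2 : (∑ j ∈ Finset.Iio i, mm j) + mm i ≤ ∑ k, mm k := by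
          calc (∑ j ∈ Finset.Iio i, mm j) + mm i
              = ∑ j ∈ insert i (Finset.Iio i), mm j := by
                rw [Finset.sum_insert (by simp)]; ring
            _ ≤ ∑ k, mm k := Finset.sum_le_sum_of_subset (Finset.subset_univ _)
        omega
    · intro u v
      obtain ⟨p, hplen, hpnodup, _⟩ := boxBuild mm c hc hgeo Finset.univ u v (by simp)
      have hdist : (boxProdFamily fun k => cycleGraph (n k)).dist u v = ∑ k, (cycleGraph (n k)).dist (u k) (v k) := by
        apply le_antisymm
        · have := dist_le p
          omega
        · have hreach : (boxProdFamily fun k => cycleGraph (n k)).Reachable u v := ⟨p⟩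
          obtain ⟨q, hq⟩ := hreach.exists_walk_length_eq_dist
          rw [← hq]
          exact boxWalk_le hconn q
      exact ⟨p, p.isPath_of_length_eq_dist (by omega), by omega, hpnodup⟩
  have hSRC_to_RC : ∀ K, StrongRainbowConnected (boxProdFamily fun k => cycleGraph (n k)) K →
      RainbowConnected (boxProdFamily fun k => cycleGraph (n k)) K := by
    rintro K ⟨cc, hcc, hp⟩
    exact ⟨cc, hcc, fun u v => by obtain ⟨p, h1, _, h3⟩ := hp u v; exact ⟨p, h1, h3⟩⟩
  have hsrc_le : src (boxProdFamily fun k => cycleGraph (n k)) ≤ ∑ k, mm k := Nat.sInf_le hSRC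
  have hsrcmem : StrongRainbowConnected (boxProdFamily fun k => cycleGraph (n k)) (src (boxProdFamily fun k => cycleGraph (n k))) :=
    Nat.sInf_mem (s := {K | StrongRainbowConnected (boxProdFamily fun k => cycleGraph (n k)) K}) ⟨_, hSRC⟩
  have hrc_le : rc (boxProdFamily fun k => cycleGraph (n k)) ≤ src (boxProdFamily fun k => cycleGraph (n k)) :=
    Nat.sInf_le (hSRC_to_RC _ hsrcmem)
  have hrcne : {K | RainbowConnected (boxProdFamily fun k => cycleGraph (n k)) K}.Nonempty :=
    ⟨∑ k, mm k, hSRC_to_RC _ hSRC⟩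
  have hrcmem : RainbowConnected (boxProdFamily fun k => cycleGraph (n k))
      (rc (boxProdFamily fun k => cycleGraph (n k))) := Nat.sInf_mem hrcne
  obtain ⟨cc, hcc, hp⟩ := hrcmem
  set x₀ : ∀ k, Fin (n k) := fun k => ⟨0, by have := h k; omega⟩ with hx₀
  set y₀ : ∀ k, Fin (n k) := fun k => ⟨n k / 2, by have := h k; omega⟩ with hy₀
  obtain ⟨p, hpath, hnodup⟩ := hp x₀ y₀
  have hlow : ∑ k, n k / 2 ≤ p.length := by
    calc ∑ k, n k / 2 ≤ ∑ k, (cycleGraph (n k)).dist (x₀ k) (y₀ k) :=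
          Finset.sum_le_sum fun k _ => cycle_antipode (n k) (h k)
      _ ≤ p.length := boxWalk_le hconn p
  have hup : p.length ≤ rc (boxProdFamily fun k => cycleGraph (n k)) := by
    have hsub : (p.edges.map cc).toFinset ⊆ Finset.range (rc (boxProdFamily fun k => cycleGraph (n k))) := by
      intro a ha
      rw [List.mem_toFinset] at ha
      obtain ⟨e, he, rfl⟩ := List.mem_map.mp ha
      exact Finset.mem_range.mpr (hcc e (Walk.edges_subset_edgeSet p he))
    have hcard := Finset.card_le_card hsub
    rwa [List.toFinset_card_of_nodup hnodup, Finset.card_range, List.length_map,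
      Walk.length_edges] at hcard
  exact ⟨by omega, hrc_le, hsrc_le⟩
end

section
/- For cycles C_{n₁},...,C_{n_r} with all n_k even, n_k ≥ 2, rc(C_{n₁}□···□C_{n_r}) = src(C_{n₁}□···□C_{n_r}) = Σ_k n_k/2. -/
open SimpleGraph Finset

namespace RCT
variable {n : ℕ}

def cdist (a b : Fin n) : ℕ := min (b - a).val (a - b).val

def ecol [NeZero n] (a b : Fin n) : ℕ :=
  if b = a + 1 then a.val % (n / 2) else if a = b + 1 then b.val % (n / 2) else 0

def colSet (a b : Fin n) : Finset ℕ :=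
  if (b - a).val ≤ n / 2 then (Finset.range (b - a).val).image (fun j => (a.val + j) % (n / 2))
  else (Finset.range (a - b).val).image (fun j => (b.val + j) % (n / 2))

lemma sub_val (a b : Fin n) :
    (a - b).val = if b.val ≤ a.val then a.val - b.val else a.val + n - b.val := by
  have ha := a.isLt
  have hb := b.isLt
  rw [Fin.sub_def]
  show (n - b.val + a.val) % n = _
  rcases le_or_gt b.val a.val with h | h
  · have he : n - b.val + a.val = (a.val - b.val) + n := by omega
    rw [he, Nat.add_mod_right, if_pos h, Nat.mod_eq_of_lt (by omega)]
  · rw [Nat.mod_eq_of_lt (by omega), if_neg (by omega)]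
    omega

lemma sub_val_add {a b : Fin n} (hab : a ≠ b) : (a - b).val + (b - a).val = n := by
  have ha := a.isLt
  have hb := b.isLt
  have hne : a.val ≠ b.val := fun hh => hab (Fin.ext hh)
  rw [sub_val, sub_val]
  split_ifs <;> omega

lemma val_one (hn : 2 ≤ n) [NeZero n] : (1 : Fin n).val = 1 := by
  rw [Fin.val_one']
  exact Nat.mod_eq_of_lt (by omega)

lemma val_add_one (hn : 2 ≤ n) [NeZero n] (a : Fin n) :
    (a + 1).val = if a.val + 1 = n then 0 else a.val + 1 := by
  have ha := a.isLt
  rw [Fin.val_add, val_one hn]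
  split_ifs with h
  · rw [h, Nat.mod_self]
  · exact Nat.mod_eq_of_lt (by omega)

lemma ecol_symm (hn : 2 ≤ n) [NeZero n] (a b : Fin n) : ecol a b = ecol b a := by
  unfold ecol
  rcases eq_or_ne b (a + 1) with h1 | h1 <;> rcases eq_or_ne a (b + 1) with h2 | h2
  · -- both: derive n = 2
    have hv1 : b.val = if a.val + 1 = n then 0 else a.val + 1 := by
      rw [h1]; exact val_add_one hn a
    have hv2 : a.val = if b.val + 1 = n then 0 else b.val + 1 := by
      conv_lhs => rw [h2]
      exact val_add_one hn b
    have ha := a.isLt; have hb := b.isLt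
    have hn2 : n = 2 := by split_ifs at hv1 hv2 <;> omega
    simp only [if_pos h1, if_pos h2, hn2]
    simp [Nat.mod_one]
  · subst h1
    rw [if_pos rfl, if_neg h2, if_pos rfl]
  · subst h2
    rw [if_neg h1, if_pos rfl, if_pos rfl]
  · simp only [if_neg h1, if_neg h2]

lemma ecol_lt {m : ℕ} (hm : n = 2 * m) (hm0 : 0 < m) [NeZero n] (a b : Fin n) : ecol a b < m := by
  have h2 : n / 2 = m := by omega
  unfold ecol
  rw [h2]
  split_ifs
  · exact Nat.mod_lt _ hm0
  · exact Nat.mod_lt _ hm0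
  · exact hm0

lemma colSet_lt {m : ℕ} (hm : n = 2 * m) (hm0 : 0 < m) (a b : Fin n) :
    ∀ c ∈ colSet a b, c < m := by
  have h2 : n / 2 = m := by omega
  unfold colSet
  rw [h2]
  intro c hc
  split_ifs at hc <;>
  · simp only [Finset.mem_image, Finset.mem_range] at hc
    obtain ⟨j, _, rfl⟩ := hc
    exact Nat.mod_lt _ hm0

lemma cdist_self (a : Fin n) : cdist a a = 0 := by
  simp [cdist, sub_val]

lemma cdist_eq_zero {a b : Fin n} (hn : 0 < n) (hc : cdist a b = 0) : a = b := by
  haveI : NeZero n := ⟨by omega⟩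
  unfold cdist at hc
  rcases Nat.min_eq_zero_iff.mp hc with hh | hh
  · have : b - a = 0 := Fin.ext (by simpa using hh)
    exact (sub_eq_zero.mp this).symm
  · have : a - b = 0 := Fin.ext (by simpa using hh)
    exact sub_eq_zero.mp this

lemma cdist_adj_step (hn : 2 ≤ n) {a a' : Fin n} (b : Fin n)
    (h : (cycleGraph n).Adj a a') : cdist a b ≤ cdist a' b + 1 := by
  haveI : NeZero n := ⟨by omega⟩
  have ha := a.isLt; have hb := b.isLt; have ha' := a'.isLt
  rw [cycleGraph_adj'] at h
  have key : ∀ c : Fin n, cdist (c + 1) b ≤ cdist c b + 1 ∧ cdist c b ≤ cdist (c + 1) b + 1 := by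
    intro c
    have hc := c.isLt
    have h1 := sub_val b (c + 1)
    have h2 := sub_val (c + 1) b
    have h3 := sub_val b c
    have h4 := sub_val c b
    have h5 := val_add_one hn c
    unfold cdist
    rw [h1, h2, h3, h4, h5] at *
    split_ifs at * <;> omega
  rcases h with h | h
  · have h' : a - a' = 1 := Fin.ext (by rw [val_one hn]; exact h)
    have haa : a = a' + 1 := by
      have := congrArg (· + a') h'
      simpa [sub_add_cancel, add_comm] using this
    rw [haa]
    exact (key a').1
  · have h' : a' - a = 1 := Fin.ext (by rw [val_one hn]; exact h)
    have haa : a' = a + 1 := by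
      have := congrArg (· + a) h'
      simpa [sub_add_cancel, add_comm] using this
    rw [haa]
    exact (key a).2

set_option maxHeartbeats 1200000 in
lemma cycle_step {m : ℕ} (hm : n = 2 * m) (hm0 : 0 < m) [NeZero n] (a b : Fin n)
    (hab : a ≠ b) :
    ∃ a' : Fin n, (cycleGraph n).Adj a a' ∧ cdist a' b + 1 = cdist a b ∧
      ecol a a' ∉ colSet a' b ∧ insert (ecol a a') (colSet a' b) = colSet a b := by
  have hn : 2 ≤ n := by omega
  have h2 : n / 2 = m := by omega
  have ha := a.isLt; have hb := b.isLt
  have hne : a.val ≠ b.val := fun hh => hab (Fin.ext hh)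
  have hsum := sub_val_add hab
  have e1 := sub_val b a
  have e2 := sub_val a b
  have ev1 := val_one (n := n) hn
  have hmodadd : ∀ u j : ℕ, (u % n + j) % m = (u + j) % m := by
    intro u j
    exact Nat.ModEq.add_right j ((Nat.mod_modEq u n).of_dvd ⟨2, by omega⟩)
  have hcan : ∀ t j j' : ℕ, j < m → j' < m → (t + j) % m = (t + j') % m → j = j' := by
    intro t j j' hj hj' hmod
    have hq := Nat.ModEq.add_left_cancel' t hmod
    rwa [Nat.ModEq, Nat.mod_eq_of_lt hj, Nat.mod_eq_of_lt hj'] at hq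
  by_cases hc : (b - a).val ≤ m
  · -- move +1
    have e3 : (a + 1).val = (a.val + 1) % n := by rw [Fin.val_add, ev1]
    have e3' : (a + 1).val = if a.val + 1 = n then 0 else a.val + 1 := by
      rw [e3]
      split_ifs with h
      · rw [h, Nat.mod_self]
      · exact Nat.mod_eq_of_lt (by omega)
    have e4 := sub_val b (a + 1)
    have e5 := sub_val (a + 1) b
    have c1a : (b - (a + 1)).val = (b - a).val - 1 := by
      split_ifs at e1 e2 e3' e4 e5 <;> omega
    have hd0 : 1 ≤ (b - a).val := by split_ifs at e1 <;> omega
    have hcolab : colSet a b = (range (b - a).val).image (fun j => (a.val + j) % m) := by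
      unfold colSet
      rw [h2, if_pos hc]
    have hcola' : colSet (a + 1) b
        = (range ((b - a).val - 1)).image (fun j => ((a + 1).val + j) % m) := by
      unfold colSet
      rw [h2, c1a, if_pos (by omega)]
    have hecol : ecol a (a + 1) = a.val % m := by
      unfold ecol
      rw [if_pos rfl, h2]
    have hfun : ∀ j, ((a + 1).val + j) % m = (a.val + (1 + j)) % m := by
      intro j
      rw [e3, hmodadd, Nat.add_assoc]
    refine ⟨a + 1, ?_, ?_, ?_, ?_⟩
    · rw [cycleGraph_adj']
      right
      have hh : a + 1 - a = 1 := by abel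
      rw [hh, ev1]
    · unfold cdist
      split_ifs at e1 e2 e3' e4 e5 <;> omega
    · rw [hcola', hecol]
      intro hmem
      simp only [Finset.mem_image, Finset.mem_range] at hmem
      obtain ⟨j, hj, hje⟩ := hmem
      rw [hfun] at hje
      have := hcan a.val (1 + j) 0 (by omega) (by omega)
        (by rw [Nat.add_zero]; exact hje)
      omega
    · rw [hcolab, hcola', hecol]
      ext col
      simp only [Finset.mem_insert, Finset.mem_image, Finset.mem_range]
      constructor
      · rintro (rfl | ⟨j, hj, rfl⟩)
        · exact ⟨0, by omega, by rw [Nat.add_zero]⟩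
        · exact ⟨j + 1, by omega, by rw [hfun j, Nat.add_comm 1 j]⟩
      · rintro ⟨j, hj, rfl⟩
        rcases Nat.eq_zero_or_pos j with rfl | hj0
        · left; rw [Nat.add_zero]
        · right
          exact ⟨j - 1, by omega, by rw [hfun (j - 1)]; congr 1; omega⟩
  · -- move -1
    have e3 : (a - 1).val = if 1 ≤ a.val then a.val - 1 else a.val + n - 1 := by
      have := sub_val a 1
      rwa [ev1] at this
    have e4 := sub_val b (a - 1)
    have e5 := sub_val (a - 1) b
    have hc2 : m < (b - a).val := by omega
    have hd2 : 1 ≤ (a - b).val ∧ (a - b).val < m := by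
      split_ifs at e1 e2 <;> omega
    have c2a : ((a - 1) - b).val = (a - b).val - 1 := by
      split_ifs at e1 e2 e3 e4 e5 <;> omega
    have hne2 : a - 1 ≠ a + 1 := by
      intro heq
      have hv := congrArg Fin.val heq
      have e6 : (a + 1).val = if a.val + 1 = n then 0 else a.val + 1 := by
        rw [Fin.val_add, ev1]
        split_ifs with h
        · rw [h, Nat.mod_self]
        · exact Nat.mod_eq_of_lt (by omega)
      rw [e3, e6] at hv
      split_ifs at hv <;> omega
    have hecol2 : ecol a (a - 1) = (a - 1).val % m := by
      unfold ecol
      rw [if_neg hne2, if_pos (by abel), h2]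
    have hecolval : (a - 1).val % m = (b.val + ((a - b).val - 1)) % m := by
      have e6 : a - 1 = b + ((a - b) - 1) := by abel
      have e7 : ((a - b) - 1).val = (a - b).val - 1 := by
        have := sub_val (a - b) 1
        rw [ev1] at this
        split_ifs at this <;> omega
      have e8 : (a - 1).val = (b.val + ((a - b) - 1).val) % n := by
        rw [e6, Fin.val_add]
      rw [e8, e7]
      exact Nat.mod_mod_of_dvd _ ⟨2, by omega⟩
    have hcolab : colSet a b = (range (a - b).val).image (fun j => (b.val + j) % m) := by
      unfold colSet
      rw [h2, if_neg (by omega)]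
    have hcola' : colSet (a - 1) b
        = (range ((a - b).val - 1)).image (fun j => (b.val + j) % m) := by
      by_cases hd1 : (a - b).val = 1
      · have hab1 : a - 1 = b := by
          rw [← show a - b = 1 from Fin.ext (by rw [ev1]; exact hd1)]
          abel
        have hbb : (b - b).val = 0 := by rw [sub_val]; simp
        rw [hab1, hd1]
        unfold colSet
        rw [hbb, if_pos (by omega)]
        simp
      · have hab' : a - 1 ≠ b := by
          intro heq
          apply hd1
          have hq : a - b = 1 := by rw [← heq]; abel
          rw [hq, ev1]
        have hsum2 := sub_val_add hab'
        have hcnd : ¬ ((b - (a - 1)).val ≤ n / 2) := by omega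
        unfold colSet
        rw [if_neg hcnd, c2a, h2]
    refine ⟨a - 1, ?_, ?_, ?_, ?_⟩
    · rw [cycleGraph_adj']
      left
      have hh : a - (a - 1) = 1 := by abel
      rw [hh, ev1]
    · unfold cdist
      split_ifs at e1 e2 e3 e4 e5 <;> omega
    · rw [hcola', hecol2, hecolval]
      intro hmem
      simp only [Finset.mem_image, Finset.mem_range] at hmem
      obtain ⟨j, hj, hje⟩ := hmem
      have := hcan b.val j ((a - b).val - 1) (by omega) (by omega) hje
      omega
    · rw [hcolab, hcola', hecol2, hecolval]
      have ht : (a - b).val = ((a - b).val - 1) + 1 := by omega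
      conv_rhs => rw [ht]
      rw [Finset.range_add_one, Finset.image_insert]


-- ===== product level =====
variable {r : ℕ}

def off (n : Fin r → ℕ) (k : Fin r) : ℕ :=
  ∑ j ∈ Finset.univ.filter (fun j => j < k), n j / 2

def ncol (n : Fin r → ℕ) (h : ∀ k, 2 ≤ n k) (k : Fin r) (a b : Fin (n k)) : ℕ :=
  letI : NeZero (n k) := ⟨by have := h k; omega⟩
  ecol a b

lemma ncol_eq {n : Fin r → ℕ} (h : ∀ k, 2 ≤ n k) (k : Fin r) [NeZero (n k)]
    (a b : Fin (n k)) : ncol n h k a b = ecol a b := rfl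

def pcol (n : Fin r → ℕ) (h : ∀ k, 2 ≤ n k) : Sym2 (∀ k, Fin (n k)) → ℕ :=
  Sym2.lift ⟨fun x y => ∑ k, if x k = y k then 0 else off n k + ncol n h k (x k) (y k), by
    intro x y
    apply Finset.sum_congr rfl
    intro k _
    rcases eq_or_ne (x k) (y k) with hk | hk
    · rw [if_pos hk, if_pos hk.symm]
    · rw [if_neg hk, if_neg hk.symm]
      haveI : NeZero (n k) := ⟨by have := h k; omega⟩
      congr 1
      exact ecol_symm (h k) _ _⟩

def Acl (n : Fin r → ℕ) (x y : ∀ k, Fin (n k)) : Finset ℕ :=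
  Finset.univ.biUnion fun k => (colSet (x k) (y k)).image (fun c => off n k + c)

lemma off_le (n : Fin r → ℕ) (k : Fin r) : off n k + n k / 2 ≤ ∑ j, n j / 2 := by
  classical
  have hk : k ∉ Finset.univ.filter (fun j => j < k) := by simp
  have h1 : ∑ j ∈ insert k (Finset.univ.filter (fun j => j < k)), n j / 2
      = n k / 2 + off n k := Finset.sum_insert hk
  have h2 : ∑ j ∈ insert k (Finset.univ.filter (fun j => j < k)), n j / 2 ≤ ∑ j, n j / 2 :=
    Finset.sum_le_sum_of_subset (Finset.subset_univ _)
  omega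

lemma off_mono (n : Fin r → ℕ) {k k' : Fin r} (hkk' : k < k') :
    off n k + n k / 2 ≤ off n k' := by
  classical
  have hk : k ∉ Finset.univ.filter (fun j => j < k) := by simp
  have h1 : ∑ j ∈ insert k (Finset.univ.filter (fun j => j < k)), n j / 2
      = n k / 2 + off n k := Finset.sum_insert hk
  have h2 : ∑ j ∈ insert k (Finset.univ.filter (fun j => j < k)), n j / 2 ≤ off n k' := by
    apply Finset.sum_le_sum_of_subset
    intro j hj
    simp only [Finset.mem_insert, Finset.mem_filter, Finset.mem_univ, true_and] at hj ⊢
    rcases hj with hj1 | hj2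
    · rw [hj1]; exact hkk'
    · exact hj2.trans hkk'
  omega

lemma block_inj (n : Fin r → ℕ) {k k' : Fin r} {c c' : ℕ} (hc : c < n k / 2)
    (hc' : c' < n k' / 2) (heq : off n k + c = off n k' + c') : k = k' := by
  rcases lt_trichotomy k k' with hlt | heq2 | hlt
  · have := off_mono n hlt
    omega
  · exact heq2
  · have := off_mono n hlt
    omega

lemma pcol_edge (n : Fin r → ℕ) (h : ∀ k, 2 ≤ n k) {x y : ∀ k, Fin (n k)} (k₀ : Fin r)
    (hne : x k₀ ≠ y k₀) (hoth : ∀ j, j ≠ k₀ → x j = y j) :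
    pcol n h s(x, y) = off n k₀ + ncol n h k₀ (x k₀) (y k₀) := by
  unfold pcol
  rw [Sym2.lift_mk]
  show (∑ k, if x k = y k then 0 else off n k + ncol n h k (x k) (y k)) = _
  rw [Finset.sum_eq_single k₀ (fun b _ hb => by rw [if_pos (hoth b hb)])
    (fun hk => absurd (Finset.mem_univ k₀) hk)]
  rw [if_neg hne]

lemma exists_good_walk (n : Fin r → ℕ) (h : ∀ k, 2 ≤ n k) (he : ∀ k, Even (n k)) :
    ∀ (N : ℕ) (x y : ∀ k, Fin (n k)), (∑ k, cdist (x k) (y k)) ≤ N →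
    ∃ p : (boxProdFamily fun k => cycleGraph (n k)).Walk x y,
      p.length = ∑ k, cdist (x k) (y k) ∧
      (p.edges.map (pcol n h)).Nodup ∧
      ∀ col ∈ p.edges.map (pcol n h), col ∈ Acl n x y := by
  intro N
  induction N with
  | zero =>
    intro x y hle
    have hz : ∀ k, cdist (x k) (y k) = 0 := fun k =>
      Finset.sum_eq_zero_iff.mp (Nat.le_zero.mp hle) k (Finset.mem_univ k)
    have hxy : x = y := funext fun k => cdist_eq_zero (by have := h k; omega) (hz k)
    subst hxy
    exact ⟨Walk.nil, by simp [Finset.sum_eq_zero fun k _ => hz k], by simp, by simp⟩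
  | succ N ih =>
    intro x y hle
    by_cases hxy : x = y
    · subst hxy
      exact ⟨Walk.nil, by simp [Finset.sum_eq_zero fun k _ => cdist_self (x k)],
        by simp, by simp⟩
    · obtain ⟨k₀, hk₀⟩ : ∃ k, x k ≠ y k := by
        by_contra hc
        push_neg at hc
        exact hxy (funext hc)
      have hm : n k₀ = 2 * (n k₀ / 2) := by
        obtain ⟨t, ht⟩ := he k₀
        omega
      have hm0 : 0 < n k₀ / 2 := by have := h k₀; omega
      haveI : NeZero (n k₀) := ⟨by have := h k₀; omega⟩
      obtain ⟨a', hadj, hdec, hnm, hins⟩ := cycle_step hm hm0 (x k₀) (y k₀) hk₀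
      classical
      set x' := Function.update x k₀ a' with hxdef
      have hx'k : x' k₀ = a' := Function.update_self k₀ a' x
      have hx'j : ∀ j, j ≠ k₀ → x' j = x j := fun j hj => Function.update_of_ne hj a' x
      have hadjP : (boxProdFamily fun k => cycleGraph (n k)).Adj x x' :=
        ⟨k₀, by rw [hx'k]; exact hadj, fun j hj => (hx'j j hj).symm⟩
      have hane : x k₀ ≠ a' := hadj.ne
      have hsum : (∑ k, cdist (x' k) (y k)) + 1 = ∑ k, cdist (x k) (y k) := by
        rw [← Finset.sum_erase_add Finset.univ _ (Finset.mem_univ k₀),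
            ← Finset.sum_erase_add Finset.univ (fun k => cdist (x k) (y k)) (Finset.mem_univ k₀),
            add_assoc]
        congr 1
        · exact Finset.sum_congr rfl fun j hj =>
            by rw [hx'j j (Finset.ne_of_mem_erase hj)]
        · rw [hx'k]
          exact hdec
      obtain ⟨p', hlen, hnd, hsub⟩ := ih x' y (by omega)
      have hceq : pcol n h s(x, x') = off n k₀ + ncol n h k₀ (x k₀) a' := by
        have := pcol_edge n h k₀ (by rw [hx'k]; exact hane) (fun j hj => (hx'j j hj).symm)
        rw [this, hx'k]
      have hclt : ncol n h k₀ (x k₀) a' < n k₀ / 2 := ecol_lt hm hm0 _ _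
      have hsubAcl : Acl n x' y ⊆ Acl n x y := by
        intro cc hcc
        simp only [Acl, Finset.mem_biUnion, Finset.mem_univ, true_and,
          Finset.mem_image] at hcc ⊢
        obtain ⟨k, c, hc, rfl⟩ := hcc
        rcases eq_or_ne k k₀ with rfl | hk
        · refine ⟨k, c, ?_, rfl⟩
          rw [← hins]
          apply Finset.mem_insert_of_mem
          rwa [hx'k] at hc
        · exact ⟨k, c, by rwa [hx'j k hk] at hc, rfl⟩
      have hnotmem : pcol n h s(x, x') ∉ Acl n x' y := by
        rw [hceq]
        intro hmem
        simp only [Acl, Finset.mem_biUnion, Finset.mem_univ, true_and,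
          Finset.mem_image] at hmem
        obtain ⟨k, c, hc, heq⟩ := hmem
        have hclt2 : c < n k / 2 := by
          have hm2 : n k = 2 * (n k / 2) := by obtain ⟨t, ht⟩ := he k; omega
          exact colSet_lt hm2 (by have := h k; omega) _ _ c hc
        have hkk : k = k₀ := block_inj n hclt2 hclt heq
        subst hkk
        have hcv : c = ncol n h k (x k) a' := by omega
        rw [hx'k] at hc
        rw [hcv] at hc
        exact hnm hc
      refine ⟨Walk.cons hadjP p', ?_, ?_, ?_⟩
      · rw [Walk.length_cons, hlen]
        omega
      · rw [Walk.edges_cons, List.map_cons, List.nodup_cons]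
        exact ⟨fun hmem => hnotmem (hsub _ hmem), hnd⟩
      · rw [Walk.edges_cons, List.map_cons]
        intro col hcol
        rcases List.mem_cons.mp hcol with rfl | hcol'
        · rw [hceq]
          simp only [Acl, Finset.mem_biUnion, Finset.mem_univ, true_and, Finset.mem_image]
          refine ⟨k₀, ncol n h k₀ (x k₀) a', ?_, rfl⟩
          rw [← hins]
          exact Finset.mem_insert_self _ _
        · exact hsubAcl (hsub _ hcol')

lemma walk_le_length (n : Fin r → ℕ) (h : ∀ k, 2 ≤ n k) :
    ∀ {x y : ∀ k, Fin (n k)} (p : (boxProdFamily fun k => cycleGraph (n k)).Walk x y),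
      (∑ k, cdist (x k) (y k)) ≤ p.length := by
  intro x y p
  induction p with
  | nil => simp [Finset.sum_eq_zero fun k _ => cdist_self _]
  | @cons u v w hadj q ih =>
    obtain ⟨k₀, hk₀, hoth⟩ := hadj
    have hstep : (∑ k, cdist (u k) (w k)) ≤ (∑ k, cdist (v k) (w k)) + 1 := by
      rw [← Finset.sum_erase_add Finset.univ _ (Finset.mem_univ k₀),
          ← Finset.sum_erase_add Finset.univ (fun k => cdist (v k) (w k)) (Finset.mem_univ k₀),
          add_assoc]
      apply Nat.add_le_add
      · apply le_of_eq
        exact Finset.sum_congr rfl fun j hj => by rw [hoth j (Finset.ne_of_mem_erase hj)]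
      · exact cdist_adj_step (h k₀) (w k₀) hk₀
    show _ ≤ q.length + 1
    omega

lemma dist_eq (n : Fin r → ℕ) (h : ∀ k, 2 ≤ n k) (he : ∀ k, Even (n k))
    (x y : ∀ k, Fin (n k)) :
    (boxProdFamily fun k => cycleGraph (n k)).dist x y = ∑ k, cdist (x k) (y k) := by
  obtain ⟨p, hlen, -, -⟩ := exists_good_walk n h he _ x y le_rfl
  refine le_antisymm (hlen ▸ SimpleGraph.dist_le p) ?_
  obtain ⟨q, hq⟩ := SimpleGraph.Reachable.exists_walk_length_eq_dist ⟨p⟩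
  rw [← hq]
  exact walk_le_length n h q

lemma pcol_lt (n : Fin r → ℕ) (h : ∀ k, 2 ≤ n k) (he : ∀ k, Even (n k)) :
    ∀ e ∈ (boxProdFamily fun k => cycleGraph (n k)).edgeSet,
      pcol n h e < ∑ k, n k / 2 := by
  intro e he'
  induction e using Sym2.ind with
  | _ x y =>
    rw [SimpleGraph.mem_edgeSet] at he'
    obtain ⟨k₀, hk₀, hoth⟩ := he'
    haveI : NeZero (n k₀) := ⟨by have := h k₀; omega⟩
    rw [pcol_edge n h k₀ hk₀.ne (fun j hj => hoth j hj)]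
    have hm : n k₀ = 2 * (n k₀ / 2) := by obtain ⟨t, ht⟩ := he k₀; omega
    have h1 : ncol n h k₀ (x k₀) (y k₀) < n k₀ / 2 := ecol_lt hm (by have := h k₀; omega) _ _
    have h2 := off_le n k₀
    omega

end RCT

/-- If all cycle lengths are even then rc = src = Σ n_k/2 for the product of cycles. -/
theorem rc_src_torus_even {r : ℕ} (n : Fin r → ℕ) (h : ∀ k, 2 ≤ n k)
    (he : ∀ k, Even (n k)) :
    rc (boxProdFamily fun k => SimpleGraph.cycleGraph (n k)) = ∑ k, n k / 2 ∧
    src (boxProdFamily fun k => SimpleGraph.cycleGraph (n k)) = ∑ k, n k / 2 := by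
  classical
  have hstrong : StrongRainbowConnected (boxProdFamily fun k => SimpleGraph.cycleGraph (n k))
      (∑ k, n k / 2) := by
    refine ⟨RCT.pcol n h, RCT.pcol_lt n h he, ?_⟩
    intro u v
    obtain ⟨p, hlen, hnd, -⟩ := RCT.exists_good_walk n h he _ u v le_rfl
    have hdist := RCT.dist_eq n h he u v
    exact ⟨p, p.isPath_of_length_eq_dist (by rw [hlen, hdist]), by rw [hlen, hdist], hnd⟩
  have hrain : RainbowConnected (boxProdFamily fun k => SimpleGraph.cycleGraph (n k))
      (∑ k, n k / 2) := by
    obtain ⟨c, hc, hp⟩ := hstrong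
    exact ⟨c, hc, fun u v => by obtain ⟨p, h1, _, h3⟩ := hp u v; exact ⟨p, h1, h3⟩⟩
  have hlow : ∀ K, RainbowConnected (boxProdFamily fun k => SimpleGraph.cycleGraph (n k)) K →
      (∑ k, n k / 2) ≤ K := by
    rintro K ⟨c, hc, hp⟩
    set u : ∀ k, Fin (n k) := fun k => ⟨0, by have := h k; omega⟩ with hu
    set v : ∀ k, Fin (n k) := fun k => ⟨n k / 2, by have := h k; omega⟩ with hv
    obtain ⟨p, hpath, hnd⟩ := hp u v
    have hDuv : ∑ k, RCT.cdist (u k) (v k) = ∑ k, n k / 2 := by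
      apply Finset.sum_congr rfl
      intro k _
      have e1 := RCT.sub_val (v k) (u k)
      have e2 := RCT.sub_val (u k) (v k)
      have hval1 : (u k).val = 0 := rfl
      have hval2 : (v k).val = n k / 2 := rfl
      have hk2 := h k
      obtain ⟨t, ht⟩ := he k
      unfold RCT.cdist
      rw [hval1, hval2] at e1 e2
      split_ifs at e1 e2 <;> omega
    have hlenge : (∑ k, n k / 2) ≤ p.length := by
      have := RCT.walk_le_length n h p
      omega
    have hndlen : (p.edges.map c).length ≤ K := by
      have hsubset : (p.edges.map c).toFinset ⊆ Finset.range K := by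
        intro col hcol
        rw [List.mem_toFinset] at hcol
        obtain ⟨e, hel, rfl⟩ := List.mem_map.mp hcol
        exact Finset.mem_range.mpr (hc e (p.edges_subset_edgeSet hel))
      have hcard := Finset.card_le_card hsubset
      rwa [List.toFinset_card_of_nodup hnd, Finset.card_range] at hcard
    have hple : p.length = (p.edges.map c).length := by
      rw [List.length_map, SimpleGraph.Walk.length_edges]
    omega
  have hlow2 : ∀ K,
      StrongRainbowConnected (boxProdFamily fun k => SimpleGraph.cycleGraph (n k)) K →
      (∑ k, n k / 2) ≤ K := by
    rintro K ⟨c, hc, hp⟩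
    exact hlow K ⟨c, hc, fun u v => by obtain ⟨p, h1, _, h3⟩ := hp u v; exact ⟨p, h1, h3⟩⟩
  constructor
  · exact le_antisymm (Nat.sInf_le hrain) (le_csInf ⟨_, hrain⟩ hlow)
  · exact le_antisymm (Nat.sInf_le hstrong) (le_csInf ⟨_, hstrong⟩ hlow2)
end

section
/- In G(rd^m, d) with d ≥ 2, r ≥ 1, m ≥ 1, for every vertex v there exists a shortest path from 0 to v, represented as a sequence of steps each equal to +d^j or −d^j, that contains no pair of steps +d^j and −d^j for the same j, contains fewer than or equal to ⌊d/2⌋ steps +d^j and at most ⌊d/2⌋ steps −d^j for each 0 ≤ j ≤ m−1, and contains at most ⌊r/2⌋ steps +d^m and at most ⌊r/2⌋ steps −d^m. -/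
/-- The recursive circulant `G(N,d)`: the circulant graph on `ZMod N` with jumps
`±d^i` for `0 ≤ i ≤ ⌈log_d N⌉ - 1`. -/
def recCirc (N d : ℕ) : SimpleGraph (ZMod N) :=
  SimpleGraph.circulantGraph {x : ZMod N | ∃ i < Nat.clog d N, x = (d : ZMod N) ^ i}

/-- The value of a step: `(j, true)` is `+d^j` and `(j, false)` is `-d^j`. -/
def stepVal (N d : ℕ) (p : ℕ × Bool) : ZMod N :=
  if p.2 then (d : ZMod N) ^ p.1 else -((d : ZMod N) ^ p.1)

lemma stepVal_neg (N d j : ℕ) (b : Bool) : stepVal N d (j, !b) = - stepVal N d (j, b) := by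
  cases b <;> simp [stepVal]

lemma stepVal_succ (N d j : ℕ) (b : Bool) :
    stepVal N d (j + 1, b) = d • stepVal N d (j, b) := by
  cases b <;> simp [stepVal, pow_succ, nsmul_eq_mul] <;> ring

lemma carry_sum (N d j t : ℕ) (b : Bool) (ht : t ≤ d) :
    stepVal N d (j + 1, b) + (d - t) • stepVal N d (j, !b) = t • stepVal N d (j, b) := by
  rw [stepVal_neg, stepVal_succ, smul_neg]
  have hsplit : (t + (d - t)) • stepVal N d (j, b)
      = t • stepVal N d (j, b) + (d - t) • stepVal N d (j, b) := add_nsmul _ _ _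
  rw [show t + (d - t) = d by omega] at hsplit
  rw [hsplit]
  abel

lemma wrap_sum (N d j t k : ℕ) (b : Bool) (ht : t ≤ k)
    (hz : k • stepVal N d (j, b) = 0) :
    (k - t) • stepVal N d (j, !b) = t • stepVal N d (j, b) := by
  rw [stepVal_neg, smul_neg]
  have h2 : t • stepVal N d (j, b) + (k - t) • stepVal N d (j, b) = 0 := by
    rw [← add_nsmul, show t + (k - t) = k by omega, hz]
  exact neg_eq_of_add_eq_zero_right (by rwa [add_comm] at h2)

lemma adj_step (N d : ℕ) (hd : 1 < d) (hN : 2 ≤ N) (p : ℕ × Bool)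
    (hp : p.1 < Nat.clog d N) (a : ZMod N) :
    (recCirc N d).Adj a (a + stepVal N d p) := by
  haveI : NeZero N := ⟨by omega⟩
  have hlt : d ^ p.1 < N := by
    by_contra h
    push_neg at h
    exact absurd ((Nat.clog_le_iff_le_pow hd).mpr h) (by omega)
  have hne : ((d : ZMod N) ^ p.1) ≠ 0 := by
    rw [← Nat.cast_pow, Ne, ZMod.natCast_eq_zero_iff]
    intro hdvd
    have := Nat.le_of_dvd (Nat.pow_pos (by omega)) hdvd
    omega
  obtain ⟨j, b⟩ := p
  have hne' : stepVal N d (j, b) ≠ 0 := by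
    cases b <;> simpa [stepVal] using hne
  rw [recCirc, SimpleGraph.circulantGraph, SimpleGraph.fromRel_adj]
  refine ⟨fun h => hne' (by linear_combination -h), ?_⟩
  cases b with
  | true =>
    right
    have he : a + stepVal N d (j, true) - a = (d : ZMod N) ^ j := by
      simp [stepVal]
    exact ⟨j, hp, he⟩
  | false =>
    left
    have he : a - (a + stepVal N d (j, false)) = (d : ZMod N) ^ j := by
      simp [stepVal]
    exact ⟨j, hp, he⟩

lemma walk_of_list (N d : ℕ) (hd : 1 < d) (hN : 2 ≤ N) :
    ∀ (L : List (ℕ × Bool)), (∀ p ∈ L, p.1 < Nat.clog d N) → ∀ a : ZMod N,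
    ∃ w : (recCirc N d).Walk a (a + (L.map (stepVal N d)).sum), w.length = L.length := by
  intro L
  induction L with
  | nil => exact fun _ a => ⟨SimpleGraph.Walk.nil.copy rfl (by simp), by simp⟩
  | cons p tl ih =>
    intro hmem a
    have hadj := adj_step N d hd hN p (hmem p (by simp)) a
    obtain ⟨w, hw⟩ := ih (fun q hq => hmem q (List.mem_cons_of_mem _ hq)) (a + stepVal N d p)
    refine ⟨(SimpleGraph.Walk.cons hadj w).copy rfl (by simp [add_assoc]), ?_⟩
    simp [hw]

lemma list_of_walk (N d : ℕ) : ∀ {a b : ZMod N} (w : (recCirc N d).Walk a b),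
    ∃ L : List (ℕ × Bool), (∀ p ∈ L, p.1 < Nat.clog d N) ∧
      (L.map (stepVal N d)).sum = b - a ∧ L.length = w.length := by
  intro a b w
  induction w with
  | nil => exact ⟨[], by simp, by simp, by simp⟩
  | @cons u u' w' h p ih =>
    obtain ⟨L, h1, h2, h3⟩ := ih
    rw [recCirc, SimpleGraph.circulantGraph, SimpleGraph.fromRel_adj] at h
    obtain ⟨-, ⟨i, hi, heq⟩ | ⟨i, hi, heq⟩⟩ := h
    · refine ⟨(i, false) :: L, ?_, ?_, by simp [h3]⟩
      · intro q hq
        rcases List.mem_cons.mp hq with rfl | hq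
        · exact hi
        · exact h1 q hq
      · simp only [List.map_cons, List.sum_cons, h2, stepVal]
        simp only [Bool.false_eq_true, if_false, ← heq]
        ring
    · refine ⟨(i, true) :: L, ?_, ?_, by simp [h3]⟩
      · intro q hq
        rcases List.mem_cons.mp hq with rfl | hq
        · exact hi
        · exact h1 q hq
      · simp only [List.map_cons, List.sum_cons, h2, stepVal, if_true, ← heq]
        ring

lemma nat_exists_max {P : ℕ → Prop} :
    ∀ (B : ℕ), (∃ n, P n) → (∀ n, P n → n ≤ B) → ∃ n, P n ∧ ∀ k, P k → k ≤ n := by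
  intro B
  induction B with
  | zero =>
    rintro ⟨n, hn⟩ hb
    have : n = 0 := Nat.le_zero.mp (hb n hn)
    exact ⟨0, this ▸ hn, fun k hk => hb k hk⟩
  | succ B ihB =>
    rintro ⟨n, hn⟩ hb
    by_cases hP : P (B + 1)
    · exact ⟨B + 1, hP, fun k hk => hb k hk⟩
    · refine ihB ⟨n, hn⟩ ?_
      intro k hk
      have := hb k hk
      rcases Nat.lt_or_ge k (B + 1) with h | h
      · omega
      · exact absurd (by omega : k = B + 1) (fun e => hP (e ▸ hk))

lemma exchange {α M : Type*} [BEq α] [LawfulBEq α] [AddCommMonoid M] (f : α → M) (L : List α) (a : α) (t : ℕ)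
    (h : t ≤ L.count a) (R : List α) (hR : (R.map f).sum = t • f a) :
    ∃ L' : List α, (∀ x ∈ L', x ∈ L ∨ x ∈ R) ∧ (L'.map f).sum = (L.map f).sum ∧
      L'.length + t = L.length + R.length ∧
      ∀ g : α → ℕ, (L'.map g).sum + t * g a = (L.map g).sum + (R.map g).sum := by
  classical
  have hsub : List.Sublist (List.replicate t a) L := List.replicate_sublist_iff.mpr h
  obtain ⟨L₁, hperm⟩ := hsub.exists_perm_append
  refine ⟨R ++ L₁, ?_, ?_, ?_, ?_⟩
  · intro x hx
    rcases List.mem_append.mp hx with hx | hx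
    · exact Or.inr hx
    · exact Or.inl (hperm.mem_iff.mpr (List.mem_append.mpr (Or.inr hx)))
  · have := (hperm.map f).sum_eq
    simp only [List.map_append, List.sum_append, List.map_replicate, List.sum_replicate] at this ⊢
    rw [this, hR]
  · have := hperm.length_eq
    simp only [List.length_append, List.length_replicate] at this ⊢
    omega
  · intro g
    have := (hperm.map g).sum_eq
    simp only [List.map_append, List.sum_append, List.map_replicate, List.sum_replicate,
      smul_eq_mul] at this ⊢
    omega

lemma main_aux (r d m : ℕ) (hd : 2 ≤ d) (hr : 1 ≤ r) (hm : 1 ≤ m)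
    (N : ℕ) (hNdef : N = r * d ^ m) (v : ZMod N) :
    ∃ L : List (ℕ × Bool),
      (∀ p ∈ L, p.1 < Nat.clog d N) ∧
      (L.map (stepVal N d)).sum = v ∧
      L.length = (recCirc N d).dist 0 v ∧
      (∀ j, ¬((j, true) ∈ L ∧ (j, false) ∈ L)) ∧
      (∀ j ≤ m - 1, L.count (j, true) ≤ d / 2 ∧ L.count (j, false) ≤ d / 2) ∧
      L.count (m, true) ≤ r / 2 ∧ L.count (m, false) ≤ r / 2 := by
  classical
  have hd1 : 1 < d := hd
  have hdm : d ^ m ≤ N := hNdef ▸ Nat.le_mul_of_pos_left _ hr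
  have hN2 : 2 ≤ N := le_trans (le_trans hd (Nat.le_self_pow (by omega) d)) hdm
  haveI : NeZero N := ⟨by omega⟩
  set c := Nat.clog d N with hcdef
  set f := stepVal N d with hfdef
  set G := recCirc N d with hGdef
  have hmc : m ≤ c := by
    by_contra h
    push_neg at h
    have h1 : N ≤ d ^ (m - 1) := (Nat.clog_le_iff_le_pow hd1).mp (by omega)
    have h2 : d ^ (m - 1) < d ^ m := Nat.pow_lt_pow_right hd1 (by omega)
    omega
  -- goodness
  have hdist_le : ∀ L : List (ℕ × Bool), (∀ p ∈ L, p.1 < c) → (L.map f).sum = v →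
      G.dist 0 v ≤ L.length := by
    intro L h1 h2
    obtain ⟨w, hw⟩ := walk_of_list N d hd1 hN2 L h1 0
    have := G.dist_le (w.copy rfl (by rw [h2, zero_add]))
    rwa [SimpleGraph.Walk.length_copy, hw] at this
  have hex : ∃ L : List (ℕ × Bool), (∀ p ∈ L, p.1 < c) ∧ (L.map f).sum = v ∧
      L.length = G.dist 0 v := by
    have hg0 : ∃ L : List (ℕ × Bool), (∀ p ∈ L, p.1 < c) ∧ (L.map f).sum = v := by
      refine ⟨List.replicate v.val (0, true), ?_, ?_⟩
      · intro p hp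
        rw [List.eq_of_mem_replicate hp]
        omega
      · simp only [List.map_replicate, List.sum_replicate, hfdef, stepVal, if_true, pow_zero]
        rw [nsmul_eq_mul, mul_one]
        exact ZMod.natCast_rightInverse v
    obtain ⟨L₀, h1, h2⟩ := hg0
    obtain ⟨w₀, hw₀⟩ := walk_of_list N d hd1 hN2 L₀ h1 0
    obtain ⟨w, hw⟩ := ((w₀.copy rfl (by rw [h2, zero_add])).reachable).exists_walk_length_eq_dist
    obtain ⟨L, hL1, hL2, hL3⟩ := list_of_walk N d w
    exact ⟨L, hL1, by rw [hL2, sub_zero], by rw [hL3, hw]⟩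
  set D := G.dist 0 v with hDdef
  -- maximize sum of exponents among optimal lists
  set P : ℕ → Prop := fun n => ∃ L : List (ℕ × Bool), (∀ p ∈ L, p.1 < c) ∧
    (L.map f).sum = v ∧ L.length = D ∧ (L.map Prod.fst).sum = n with hPdef
  have hPB : ∀ n, P n → n ≤ D * c := by
    rintro n ⟨L, h1, h2, h3, h4⟩
    calc n = (L.map Prod.fst).sum := h4.symm
    _ ≤ (L.map Prod.fst).length • c :=
        List.sum_le_card_nsmul _ _ (fun x hx => by
          obtain ⟨p, hp, rfl⟩ := List.mem_map.mp hx
          exact le_of_lt (h1 p hp))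
    _ = D * c := by rw [List.length_map, h3, smul_eq_mul]
  have hPex : ∃ n, P n := by
    obtain ⟨L, h1, h2, h3⟩ := hex
    exact ⟨(L.map Prod.fst).sum, L, h1, h2, h3, rfl⟩
  obtain ⟨n₀, ⟨L, hLc, hLsum, hLlen, hLS⟩, hmax⟩ := nat_exists_max (D * c) hPex hPB
  -- the generic move producing contradictions
  have move : ∀ (j : ℕ) (b : Bool) (t : ℕ) (R : List (ℕ × Bool)),
      t ≤ L.count (j, b) → (∀ p ∈ R, p.1 < c) → (R.map f).sum = t • f (j, b) →
      (R.length < t ∨ (R.length = t ∧ t * j < (R.map Prod.fst).sum)) → False := by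
    intro j b t R hcount hRc hRsum hor
    obtain ⟨L', hmem, hsum, hlen, hg⟩ := exchange f L (j, b) t hcount R hRsum
    have hL'c : ∀ p ∈ L', p.1 < c := by
      intro p hp
      rcases hmem p hp with h | h
      · exact hLc p h
      · exact hRc p h
    have hdle : D ≤ L'.length := hdist_le L' hL'c (by rw [hsum, hLsum])
    rcases hor with h | ⟨h1, h2⟩
    · omega
    · have hlen' : L'.length = D := by omega
      have hS := hg Prod.fst
      have : (L'.map Prod.fst).sum ≤ n₀ :=
        hmax _ ⟨L', hL'c, by rw [hsum, hLsum], hlen', rfl⟩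
      simp only at hS
      omega
  refine ⟨L, hLc, hLsum, hLlen, ?_, ?_, ?_, ?_⟩
  · -- no cancelling pair
    rintro j ⟨h1, h2⟩
    obtain ⟨L₁, p1⟩ : ∃ L₁, L.Perm ((j, true) :: L₁) := ⟨_, List.perm_cons_erase h1⟩
    have h2' : (j, false) ∈ L₁ := by
      rcases List.mem_cons.mp (p1.mem_iff.mp h2) with h | h
      · exact absurd (congrArg Prod.snd h) (by simp)
      · exact h
    obtain ⟨L₂, p2⟩ : ∃ L₂, L₁.Perm ((j, false) :: L₂) := ⟨_, List.perm_cons_erase h2'⟩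
    have hsum2 : (L.map f).sum = (L₂.map f).sum := by
      have e1 := (p1.map f).sum_eq
      have e2 := (p2.map f).sum_eq
      simp only [List.map_cons, List.sum_cons] at e1 e2
      rw [e1, e2, ← add_assoc]
      have hz : f (j, true) + f (j, false) = 0 := by
        show stepVal N d (j, true) + stepVal N d (j, false) = 0
        simp [stepVal]
      rw [hz, zero_add]
    have q1 := p1.length_eq
    have q2 := p2.length_eq
    simp only [List.length_cons] at q1 q2
    have hc2 : ∀ p ∈ L₂, p.1 < c := fun p hp =>
      hLc p (p1.mem_iff.mpr (List.mem_cons_of_mem _ (p2.mem_iff.mpr (List.mem_cons_of_mem _ hp))))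
    have := hdist_le L₂ hc2 (by rw [← hsum2, hLsum])
    omega
  · -- counts at level j ≤ m - 1
    intro j hj
    have hjm : j + 1 ≤ m := by omega
    have key : ∀ b : Bool, L.count (j, b) ≤ d / 2 := by
      intro b
      by_contra hcnt
      push_neg at hcnt
      set t := d / 2 + 1 with htdef
      have ht : t ≤ L.count (j, b) := hcnt
      have htd : t ≤ d := by omega
      by_cases hjc : j + 1 < c
      · -- carry move: t copies of (j,b) ↦ (j+1,b) and (d-t) copies of (j,!b)
        refine move j b t ((j + 1, b) :: List.replicate (d - t) (j, !b)) ht ?_ ?_ ?_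
        · intro p hp
          rcases List.mem_cons.mp hp with rfl | hp
          · exact hjc
          · rw [List.eq_of_mem_replicate hp]
            omega
        · simp only [List.map_cons, List.sum_cons, List.map_replicate, List.sum_replicate]
          exact carry_sum N d j t b htd
        · have hRlen : ((j + 1, b) :: List.replicate (d - t) (j, !b)).length = (d - t) + 1 := by
            simp
          rcases Nat.lt_or_ge ((d - t) + 1) t with h | h
          · exact Or.inl (by omega)
          · refine Or.inr ⟨by omega, ?_⟩
            have : (((j + 1, b) :: List.replicate (d - t) (j, !b)).map Prod.fst).sum
                = (j + 1) + (d - t) * j := by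
              simp [List.sum_replicate]
            have heq : (d - t) + 1 = t := by omega
            rw [this]
            generalize hq : d - t = q at heq ⊢
            rw [← heq, add_mul, one_mul]
            omega
      · -- boundary: d^(j+1) = N, so t copies of (j,b) ↦ (d-t) copies of (j,!b)
        have hNeq : d ^ (j + 1) = N := by
          have h1 : N ≤ d ^ (j + 1) := (Nat.clog_le_iff_le_pow hd1).mp (by omega)
          have h2 : d ^ (j + 1) ≤ d ^ m := Nat.pow_le_pow_right (by omega) hjm
          omega
        have hzero : d • stepVal N d (j, b) = 0 := by
          rw [← stepVal_succ]
          have hp0 : ((d : ZMod N) ^ (j + 1)) = 0 := by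
            rw [← Nat.cast_pow, hNeq, ZMod.natCast_self]
          cases b <;> simp [stepVal, hp0]
        refine move j b t (List.replicate (d - t) (j, !b)) ht ?_ ?_ (Or.inl ?_)
        · intro p hp
          rw [List.eq_of_mem_replicate hp]
          omega
        · simp only [List.map_replicate, List.sum_replicate]
          exact wrap_sum N d j t d b htd hzero
        · simp
          omega
    exact ⟨key true, key false⟩
  · -- count (m, true)
    by_cases hmcs : m < c
    · by_contra hcnt
      push_neg at hcnt
      set t := r / 2 + 1 with htdef
      have ht : t ≤ L.count (m, true) := hcnt
      have htr : t ≤ r := by omega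
      have hzero : r • stepVal N d (m, true) = 0 := by
        have hp0 : ((r : ZMod N) * (d : ZMod N) ^ m) = 0 := by
          rw [← Nat.cast_pow, ← Nat.cast_mul, ← hNdef, ZMod.natCast_self]
        simp [stepVal, nsmul_eq_mul, hp0]
      refine move m true t (List.replicate (r - t) (m, false)) ht ?_ ?_ (Or.inl ?_)
      · intro p hp
        rw [List.eq_of_mem_replicate hp]
        exact hmcs
      · simp only [List.map_replicate, List.sum_replicate]
        exact wrap_sum N d m t r true htr hzero
      · simp
        omega
    · have : (m, true) ∉ L := fun h => hmcs (hLc _ h)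
      rw [List.count_eq_zero_of_not_mem this]
      omega
  · -- count (m, false)
    by_cases hmcs : m < c
    · by_contra hcnt
      push_neg at hcnt
      set t := r / 2 + 1 with htdef
      have ht : t ≤ L.count (m, false) := hcnt
      have htr : t ≤ r := by omega
      have hzero : r • stepVal N d (m, false) = 0 := by
        have hp0 : ((r : ZMod N) * (d : ZMod N) ^ m) = 0 := by
          rw [← Nat.cast_pow, ← Nat.cast_mul, ← hNdef, ZMod.natCast_self]
        simp [stepVal, nsmul_eq_mul, hp0]
      refine move m false t (List.replicate (r - t) (m, true)) ht ?_ ?_ (Or.inl ?_)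
      · intro p hp
        rw [List.eq_of_mem_replicate hp]
        exact hmcs
      · simp only [List.map_replicate, List.sum_replicate]
        exact wrap_sum N d m t r false htr hzero
      · simp
        omega
    · have : (m, false) ∉ L := fun h => hmcs (hLc _ h)
      rw [List.count_eq_zero_of_not_mem this]
      omega

/-- Improved shortest-path lemma for G(rd^m, d): a shortest path from 0 to v can be
chosen with no cancelling pair ±d^j, at most ⌊d/2⌋ steps of each sign ±d^j for
j ≤ m-1, and at most ⌊r/2⌋ steps of each sign ±d^m. -/
theorem exists_shortest_path_steps (r d m : ℕ) (hd : 2 ≤ d) (hr : 1 ≤ r) (hm : 1 ≤ m)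
    (v : ZMod (r * d ^ m)) :
    ∃ L : List (ℕ × Bool),
      (∀ p ∈ L, p.1 < Nat.clog d (r * d ^ m)) ∧
      (L.map (stepVal (r * d ^ m) d)).sum = v ∧
      L.length = (recCirc (r * d ^ m) d).dist 0 v ∧
      (∀ j, ¬((j, true) ∈ L ∧ (j, false) ∈ L)) ∧
      (∀ j ≤ m - 1, L.count (j, true) ≤ d / 2 ∧ L.count (j, false) ≤ d / 2) ∧
      L.count (m, true) ≤ r / 2 ∧ L.count (m, false) ≤ r / 2 :=
  main_aux r d m hd hr hm _ rfl v
end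

section
/- For the recursive circulant G(r·3^m, 3) with r ∈ {1,2} and m ≥ 1, rc(G(r·3^m,3)) = src(G(r·3^m,3)) = m + ⌊r/2⌋. -/
open SimpleGraph Finset

namespace RcAux

/-- integer value of a step: `(j, true)` is `+3^j`, `(j, false)` is `-3^j`. -/
def iVal (p : ℕ × Bool) : ℤ := if p.2 then 3 ^ p.1 else -(3 ^ p.1)

def iSum (l : List (ℕ × Bool)) : ℤ := (l.map iVal).sum

/-- balanced ternary weight relative to modulus `r * 3^m`. -/
def bW (r : ℕ) : ℕ → ℤ → ℕ
  | 0, y => if r = 2 then (y % 2).toNat else 0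
  | m+1, y =>
    if y % 3 = 0 then bW r m (y / 3)
    else if y % 3 = 1 then bW r m ((y - 1) / 3) + 1
    else bW r m ((y + 1) / 3) + 1

/-- canonical balanced ternary representation list. -/
def bRep (r : ℕ) : ℕ → ℤ → List (ℕ × Bool)
  | 0, y => if r = 2 ∧ y % 2 = 1 then [(0, true)] else []
  | m+1, y =>
    if y % 3 = 0 then (bRep r m (y / 3)).map (fun p => (p.1 + 1, p.2))
    else if y % 3 = 1 then
      (0, true) :: (bRep r m ((y - 1) / 3)).map (fun p => (p.1 + 1, p.2))
    else (0, false) :: (bRep r m ((y + 1) / 3)).map (fun p => (p.1 + 1, p.2))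

lemma bW_succ (r m : ℕ) {y a d : ℤ} (hd : d = -1 ∨ d = 0 ∨ d = 1)
    (hy : y = 3 * a + d) :
    bW r (m + 1) y = bW r m a + d.natAbs := by
  rcases hd with rfl | rfl | rfl
  · have h1 : y % 3 = 2 := by omega
    have h2 : (y + 1) / 3 = a := by omega
    simp [bW, h1, h2]
  · have h1 : y % 3 = 0 := by omega
    have h2 : y / 3 = a := by omega
    simp [bW, h1, h2]
  · have h1 : y % 3 = 1 := by omega
    have h2 : (y - 1) / 3 = a := by omega
    simp [bW, h1, h2]

lemma bRep_succ (r m : ℕ) {y a d : ℤ} (hd : d = -1 ∨ d = 0 ∨ d = 1)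
    (hy : y = 3 * a + d) :
    bRep r (m + 1) y = (if d = 0 then [] else [((0 : ℕ), if d = 1 then true else false)])
      ++ (bRep r m a).map (fun p => (p.1 + 1, p.2)) := by
  rcases hd with rfl | rfl | rfl
  · have h1 : y % 3 = 2 := by omega
    have h2 : (y + 1) / 3 = a := by omega
    simp [bRep, h1, h2]
  · have h1 : y % 3 = 0 := by omega
    have h2 : y / 3 = a := by omega
    simp [bRep, h1, h2]
  · have h1 : y % 3 = 1 := by omega
    have h2 : (y - 1) / 3 = a := by omega
    simp [bRep, h1, h2]

/-- `bW` only depends on the residue mod `r * 3^m`. -/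
lemma bW_congr (r : ℕ) (hr : r = 1 ∨ r = 2) :
    ∀ (m : ℕ) (y z : ℤ), ((r : ℤ) * 3 ^ m) ∣ (z - y) → bW r m y = bW r m z := by
  intro m
  induction m with
  | zero =>
    intro y z hdvd
    rcases hr with rfl | rfl
    · simp [bW]
    · obtain ⟨k, hk⟩ := hdvd
      simp only [pow_zero, mul_one] at hk
      have : y % 2 = z % 2 := by omega
      simp [bW, this]
  | succ m ih =>
    intro y z hdvd
    obtain ⟨k, hk⟩ := hdvd
    set n : ℤ := (r : ℤ) * 3 ^ m with hn
    have hk' : z - y = 3 * (n * k) := by rw [hk, hn]; ring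
    have h3 : y % 3 = z % 3 := by omega
    set d : ℤ := y % 3 - if y % 3 = 2 then 3 else 0 with hdd
    have hd : d = -1 ∨ d = 0 ∨ d = 1 := by omega
    have hy : y = 3 * ((y - d) / 3) + d := by omega
    have hz : z = 3 * ((z - d) / 3) + d := by omega
    rw [bW_succ r m hd hy, bW_succ r m hd hz]
    have : (z - d) / 3 - (y - d) / 3 = n * k := by omega
    rw [ih _ _ ⟨k, this⟩]

lemma bW_neg (r : ℕ) : ∀ (m : ℕ) (y : ℤ), bW r m (-y) = bW r m y := by
  intro m
  induction m with
  | zero =>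
    intro y
    rcases eq_or_ne r 2 with rfl | h
    · have : (-y) % 2 = y % 2 := by omega
      simp [bW, this]
    · simp [bW, h]
  | succ m ih =>
    intro y
    set d : ℤ := y % 3 - if y % 3 = 2 then 3 else 0 with hdd
    have hd : d = -1 ∨ d = 0 ∨ d = 1 := by omega
    have hy : y = 3 * ((y - d) / 3) + d := by omega
    have hny : -y = 3 * (-((y - d) / 3)) + (-d) := by omega
    rw [bW_succ r m hd hy, bW_succ r m (by omega) hny, ih]
    simp

lemma bW_add_pow_le (r : ℕ) : ∀ (m i : ℕ) (y : ℤ),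
    bW r m (y + 3 ^ i) ≤ bW r m y + 1 := by
  intro m
  induction m with
  | zero =>
    intro i y
    rcases eq_or_ne r 2 with rfl | h
    · have h3 : (3 : ℤ) ^ i % 2 = 1 := by
        obtain ⟨k, hk⟩ := (by decide : Odd (3 : ℤ)).pow (n := i)
        omega
      simp [bW]
      omega
    · simp [bW, h]
  | succ m ih =>
    intro i y
    obtain ⟨a, d, hd, hy⟩ : ∃ a d : ℤ, (d = -1 ∨ d = 0 ∨ d = 1) ∧ y = 3 * a + d :=
      ⟨(y - (y % 3 - if y % 3 = 2 then 3 else 0)) / 3,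
       y % 3 - if y % 3 = 2 then 3 else 0, by omega, by omega⟩
    cases i with
    | zero =>
      rcases hd with rfl | rfl | rfl
      · -- d = -1 : y + 1 = 3a, weight drops
        rw [bW_succ r m (by omega) hy, bW_succ r m (by omega) (show y + 3 ^ 0 = 3 * a + 0 by omega)]
        omega
      · rw [bW_succ r m (by omega) hy, bW_succ r m (by omega) (show y + 3 ^ 0 = 3 * a + 1 by omega)]
        omega
      · -- d = 1 : carry
        rw [bW_succ r m (by omega) hy, bW_succ r m (by omega) (show y + 3 ^ 0 = 3 * (a + 1) + (-1) by omega)]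
        have := ih 0 a
        simp only [pow_zero] at this
        omega
    | succ i =>
      rw [bW_succ r m hd hy, bW_succ r m hd (show y + 3 ^ (i + 1) = 3 * (a + 3 ^ i) + d by rw [hy]; ring)]
      have := ih i a
      omega

lemma bW_zero (r m : ℕ) : bW r m 0 = 0 := by
  induction m with
  | zero => rcases eq_or_ne r 2 with rfl | h <;> simp [bW, *]
  | succ m ih => rw [bW_succ r m (by omega) (show (0:ℤ) = 3 * 0 + 0 by ring)]; simpa

/-- Lipschitz property: adding one step changes the weight by at most one. -/
lemma bW_step_le (r : ℕ) (hr : r = 1 ∨ r = 2) (m : ℕ) (p : ℕ × Bool) (y z : ℤ)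
    (h : ((r : ℤ) * 3 ^ m) ∣ (z - (y + iVal p))) :
    bW r m z ≤ bW r m y + 1 := by
  have hz : bW r m z = bW r m (y + iVal p) :=
    (bW_congr r hr m (y + iVal p) z h).symm
  rw [hz]
  rcases p with ⟨i, b⟩
  cases b
  · have : y + iVal (i, false) = -((-y) + 3 ^ i) := by simp [iVal]; ring
    rw [this, bW_neg]
    calc bW r m (-y + 3 ^ i) ≤ bW r m (-y) + 1 := bW_add_pow_le r m i (-y)
    _ = bW r m y + 1 := by rw [bW_neg]
  · have : y + iVal (i, true) = y + 3 ^ i := by simp [iVal]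
    rw [this]
    exact bW_add_pow_le r m i y

lemma iSum_nil : iSum [] = 0 := rfl

lemma iSum_cons (p : ℕ × Bool) (t : List (ℕ × Bool)) :
    iSum (p :: t) = iVal p + iSum t := by simp [iSum]

lemma iSum_shift (l : List (ℕ × Bool)) :
    iSum (l.map (fun p => (p.1 + 1, p.2))) = 3 * iSum l := by
  induction l with
  | nil => simp [iSum]
  | cons p t ih =>
    simp only [List.map_cons, iSum_cons, ih]
    have : iVal (p.1 + 1, p.2) = 3 * iVal p := by
      rcases p with ⟨i, b⟩; cases b <;> simp [iVal, pow_succ] <;> ring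
    rw [this]; ring

/-- any list of steps summing to `y` mod `r*3^m` has length at least `bW r m y`. -/
lemma bW_le_length (r : ℕ) (hr : r = 1 ∨ r = 2) (m : ℕ) :
    ∀ (l : List (ℕ × Bool)) (y : ℤ),
      ((r : ℤ) * 3 ^ m) ∣ (y - iSum l) → bW r m y ≤ l.length := by
  intro l
  induction l with
  | nil =>
    intro y h
    rw [iSum_nil, sub_zero] at h
    have : bW r m y = bW r m 0 := (bW_congr r hr m 0 y (by simpa using h)).symm
    simpa [bW_zero] using le_of_eq this
  | cons p t ih =>
    intro y h
    have h' : ((r : ℤ) * 3 ^ m) ∣ (y - (iSum t + iVal p)) := by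
      rw [iSum_cons] at h; convert h using 2; ring
    have h1 : bW r m y ≤ bW r m (iSum t) + 1 := bW_step_le r hr m p (iSum t) y h'
    have h2 : bW r m (iSum t) ≤ t.length := ih (iSum t) (by simp)
    simpa [List.length_cons] using h1.trans (by omega)

lemma bW_target1 : ∀ (m : ℕ) (y : ℤ), 2 * y + 1 = 3 ^ m → bW 1 m y = m := by
  intro m
  induction m with
  | zero =>
    intro y hy
    norm_num at hy
    have : y = 0 := by omega
    simp [this, bW_zero]
  | succ m ih =>
    intro y hy
    obtain ⟨a, ha⟩ : ∃ a : ℤ, 2 * a + 1 = 3 ^ m := by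
      obtain ⟨k, hk⟩ := (by exact (by decide : Odd (3:ℤ)).pow : Odd ((3:ℤ) ^ m))
      exact ⟨k, by omega⟩
    have hya : y = 3 * a + 1 := by
      have : (3:ℤ) ^ (m+1) = 3 * 3 ^ m := by ring
      omega
    rw [bW_succ 1 m (by omega) hya, ih a ha]
    simp

lemma bW_target2 : ∀ (m : ℕ) (y : ℤ), 2 * y + 1 = 3 ^ (m + 1) → bW 2 m y = m + 1 := by
  intro m
  induction m with
  | zero =>
    intro y hy
    have : y = 1 := by omega
    simp [this, bW]
  | succ m ih =>
    intro y hy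
    obtain ⟨a, ha⟩ : ∃ a : ℤ, 2 * a + 1 = 3 ^ (m + 1) := by
      obtain ⟨k, hk⟩ := (by exact (by decide : Odd (3:ℤ)).pow : Odd ((3:ℤ) ^ (m + 1)))
      exact ⟨k, by omega⟩
    have hya : y = 3 * a + 1 := by
      have : (3:ℤ) ^ (m+2) = 3 * 3 ^ (m+1) := by ring
      omega
    rw [bW_succ 2 m (by omega) hya, ih a ha]
    simp

lemma bRep_length (r : ℕ) : ∀ (m : ℕ) (y : ℤ), (bRep r m y).length = bW r m y := by
  intro m
  induction m with
  | zero =>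
    intro y
    rcases eq_or_ne r 2 with rfl | h
    · rcases Int.emod_two_eq y with h2 | h2 <;> simp [bRep, bW, h2]
    · simp [bRep, bW, h]
  | succ m ih =>
    intro y
    obtain ⟨a, d, hd, hy⟩ : ∃ a d : ℤ, (d = -1 ∨ d = 0 ∨ d = 1) ∧ y = 3 * a + d :=
      ⟨(y - (y % 3 - if y % 3 = 2 then 3 else 0)) / 3,
       y % 3 - if y % 3 = 2 then 3 else 0, by omega, by omega⟩
    rw [bRep_succ r m hd hy, bW_succ r m hd hy]
    rcases hd with rfl | rfl | rfl <;> simp [ih] <;> omega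

lemma bRep_sum (r : ℕ) (hr : r = 1 ∨ r = 2) :
    ∀ (m : ℕ) (y : ℤ), ((r : ℤ) * 3 ^ m) ∣ (iSum (bRep r m y) - y) := by
  intro m
  induction m with
  | zero =>
    intro y
    rcases hr with rfl | rfl
    · simp
    · rcases Int.emod_two_eq y with h2 | h2 <;>
        simp [bRep, h2, iSum_nil, iSum_cons, iVal] <;> omega
  | succ m ih =>
    intro y
    obtain ⟨a, d, hd, hy⟩ : ∃ a d : ℤ, (d = -1 ∨ d = 0 ∨ d = 1) ∧ y = 3 * a + d :=
      ⟨(y - (y % 3 - if y % 3 = 2 then 3 else 0)) / 3,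
       y % 3 - if y % 3 = 2 then 3 else 0, by omega, by omega⟩
    rw [bRep_succ r m hd hy]
    obtain ⟨k, hk⟩ := ih a
    refine ⟨k, ?_⟩
    have hs : iSum ((if d = 0 then [] else [((0:ℕ), if d = 1 then true else false)])
        ++ (bRep r m a).map (fun p => (p.1 + 1, p.2))) = d + 3 * iSum (bRep r m a) := by
      rcases hd with rfl | rfl | rfl <;>
        simp [iSum, iVal, iSum_shift] <;>
      · have := iSum_shift (bRep r m a); simp [iSum] at this ⊢; omega
    rw [hs, hy]
    have : (r:ℤ) * 3 ^ (m+1) * k = 3 * ((r:ℤ) * 3 ^ m * k) := by ring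
    rw [this, ← hk]
    ring

lemma bRep_fst_lt (r : ℕ) (hr : r = 1 ∨ r = 2) :
    ∀ (m : ℕ) (y : ℤ), ∀ p ∈ bRep r m y, p.1 < m + (r - 1) := by
  intro m
  induction m with
  | zero =>
    intro y p hp
    rcases hr with rfl | rfl
    · simp [bRep] at hp
    · by_cases h2 : y % 2 = 1 <;> simp [bRep, h2] at hp
      subst hp; simp
  | succ m ih =>
    intro y p hp
    obtain ⟨a, d, hd, hy⟩ : ∃ a d : ℤ, (d = -1 ∨ d = 0 ∨ d = 1) ∧ y = 3 * a + d :=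
      ⟨(y - (y % 3 - if y % 3 = 2 then 3 else 0)) / 3,
       y % 3 - if y % 3 = 2 then 3 else 0, by omega, by omega⟩
    rw [bRep_succ r m hd hy] at hp
    rcases List.mem_append.mp hp with h | h
    · have h0 : p.1 = 0 := by
        rcases hd with rfl | rfl | rfl <;> simp_all
      omega
    · obtain ⟨q, hq, rfl⟩ := List.mem_map.mp h
      have := ih a q hq
      omega

lemma bRep_pairwise (r : ℕ) :
    ∀ (m : ℕ) (y : ℤ), ((bRep r m y).map Prod.fst).Pairwise (· < ·) := by
  intro m
  induction m with
  | zero =>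
    intro y
    rcases eq_or_ne r 2 with rfl | h
    · by_cases h2 : y % 2 = 1 <;> simp [bRep, h2]
    · simp [bRep, h]
  | succ m ih =>
    intro y
    obtain ⟨a, d, hd, hy⟩ : ∃ a d : ℤ, (d = -1 ∨ d = 0 ∨ d = 1) ∧ y = 3 * a + d :=
      ⟨(y - (y % 3 - if y % 3 = 2 then 3 else 0)) / 3,
       y % 3 - if y % 3 = 2 then 3 else 0, by omega, by omega⟩
    rw [bRep_succ r m hd hy]
    have hmap : ((bRep r m a).map (fun p => (p.1 + 1, p.2))).map Prod.fst
        = ((bRep r m a).map Prod.fst).map (· + 1) := by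
      simp [List.map_map, Function.comp]
    have hpw : (((bRep r m a).map Prod.fst).map (· + 1)).Pairwise (· < ·) :=
      (ih a).map _ (fun a b h => by omega)
    have haux : ∀ b : Bool, ((((0:ℕ), b) :: (bRep r m a).map (fun p => (p.1 + 1, p.2))).map
        Prod.fst).Pairwise (· < ·) := by
      intro b
      simp only [List.map_cons, hmap]
      rw [List.pairwise_cons]
      refine ⟨fun x hx => ?_, hpw⟩
      obtain ⟨q, _, rfl⟩ := List.mem_map.mp hx
      omega
    rcases hd with rfl | rfl | rfl
    · simpa using haux false
    · simpa [hmap] using hpw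
    · simpa using haux true

lemma pow_dvd_iSum (a : ℕ) : ∀ l : List (ℕ × Bool), (∀ p ∈ l, a ≤ p.1) →
    (3 : ℤ) ^ a ∣ iSum l := by
  intro l
  induction l with
  | nil => intro _; simp [iSum_nil]
  | cons p t ih =>
    intro h
    rw [iSum_cons]
    refine dvd_add ?_ (ih fun q hq => h q (List.mem_cons_of_mem _ hq))
    have hp : a ≤ p.1 := h p List.mem_cons_self
    rcases p with ⟨i, b⟩
    cases b <;> simp [iVal] <;> exact (pow_dvd_pow 3 hp)

lemma iSum_ne_zero : ∀ (l : List (ℕ × Bool)), l ≠ [] →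
    ((l.map Prod.fst).Pairwise (· < ·)) → iSum l ≠ 0 := by
  rintro (_ | ⟨p, t⟩) hne hpw
  · exact absurd rfl hne
  · intro h0
    simp only [List.map_cons, List.pairwise_cons] at hpw
    have hdvd : (3 : ℤ) ^ (p.1 + 1) ∣ iSum t := by
      refine pow_dvd_iSum _ t fun q hq => ?_
      have := hpw.1 q.1 (List.mem_map.mpr ⟨q, hq, rfl⟩)
      omega
    rw [iSum_cons] at h0
    have hdvd2 : (3 : ℤ) ^ (p.1 + 1) ∣ iVal p := by
      have : iVal p = -iSum t := by linarith
      rw [this]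
      exact hdvd.neg_right
    have habs : (3 : ℤ) ^ (p.1 + 1) ∣ 3 ^ p.1 := by
      rcases p with ⟨i, b⟩
      cases b <;> simpa [iVal] using hdvd2
    have h1 : (3 : ℤ) ^ (p.1 + 1) ≤ 3 ^ p.1 :=
      Int.le_of_dvd (by positivity) habs
    have h2 : (3 : ℤ) ^ (p.1 + 1) = 3 * 3 ^ p.1 := by ring
    have h3 : (0 : ℤ) < 3 ^ p.1 := by positivity
    linarith

lemma abs_iVal (p : ℕ × Bool) : |iVal p| = 3 ^ p.1 := by
  rcases p with ⟨i, b⟩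
  cases b <;> simp [iVal] <;> positivity

lemma abs_iSum_le_sum : ∀ l : List (ℕ × Bool),
    |iSum l| ≤ ((l.map Prod.fst).map (fun i => (3:ℤ) ^ i)).sum := by
  intro l
  induction l with
  | nil => simp [iSum_nil]
  | cons p t ih =>
    rw [iSum_cons]
    simp only [List.map_cons, List.sum_cons]
    calc |iVal p + iSum t| ≤ |iVal p| + |iSum t| := abs_add_le _ _
    _ ≤ 3 ^ p.1 + _ := by rw [abs_iVal]; exact add_le_add_right ih _
    _ = _ := rfl

lemma two_mul_abs_iSum_le (M : ℕ) (l : List (ℕ × Bool))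
    (hlt : ∀ p ∈ l, p.1 < M) (hpw : (l.map Prod.fst).Pairwise (· < ·)) :
    2 * |iSum l| ≤ 3 ^ M - 1 := by
  have hnd : (l.map Prod.fst).Nodup := hpw.imp ne_of_lt
  have h1 : |iSum l| ≤ ((l.map Prod.fst).map (fun i => (3:ℤ) ^ i)).sum := abs_iSum_le_sum l
  have h2 : ((l.map Prod.fst).map (fun i => (3:ℤ) ^ i)).sum
      = ∑ i ∈ (l.map Prod.fst).toFinset, (3:ℤ) ^ i :=
    (List.sum_toFinset _ hnd).symm
  have h3 : ∑ i ∈ (l.map Prod.fst).toFinset, (3:ℤ) ^ i ≤ ∑ i ∈ Finset.range M, (3:ℤ) ^ i := by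
    refine Finset.sum_le_sum_of_subset_of_nonneg ?_ (fun i _ _ => by positivity)
    intro i hi
    rw [List.mem_toFinset] at hi
    obtain ⟨q, hq, rfl⟩ := List.mem_map.mp hi
    exact Finset.mem_range.mpr (hlt q hq)
  have h4 : (∑ i ∈ Finset.range M, (3:ℤ) ^ i) * (3 - 1) = 3 ^ M - 1 := geom_sum_mul 3 M
  linarith

lemma clog_eq (r m : ℕ) (hr : r = 1 ∨ r = 2) :
    Nat.clog 3 (r * 3 ^ m) = m + (r - 1) := by
  rcases hr with rfl | rfl
  · simpa using Nat.clog_pow 3 m (by norm_num)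
  · have h3 : 0 < 3 ^ m := Nat.pow_pos (by norm_num)
    refine le_antisymm ?_ ?_
    · refine (Nat.clog_le_iff_le_pow (by norm_num)).mpr ?_
      have : (3:ℕ) ^ (m + (2 - 1)) = 3 * 3 ^ m := by
        rw [show m + (2 - 1) = m + 1 from rfl, pow_succ]; ring
      omega
    · have hnle : ¬ Nat.clog 3 (2 * 3 ^ m) ≤ m := fun h => by
        have := (Nat.clog_le_iff_le_pow (by norm_num : (1:ℕ) < 3)).mp h
        omega
      omega

-- ## Graph-side lemmas

/-- index extractor. -/
noncomputable def colIdx (N : ℕ) (x : ZMod N) : ℕ :=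
  sInf {i | x = ((3 : ℕ) : ZMod N) ^ i ∨ x = -((3 : ℕ) : ZMod N) ^ i}

lemma colIdx_neg (N : ℕ) (x : ZMod N) : colIdx N (-x) = colIdx N x := by
  unfold colIdx
  congr 1
  ext i
  simp only [Set.mem_setOf_eq]
  constructor
  · rintro (h | h)
    · exact Or.inr (by rw [← h]; ring)
    · exact Or.inl (by have := congrArg Neg.neg h; simpa using this)
  · rintro (h | h)
    · exact Or.inr (by rw [h])
    · exact Or.inl (by rw [h]; ring)

/-- the edge coloring. -/
noncomputable def col (N : ℕ) : Sym2 (ZMod N) → ℕ :=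
  Sym2.lift ⟨fun u v => colIdx N (v - u), by
    intro a b
    show colIdx N (b - a) = colIdx N (a - b)
    rw [show a - b = -(b - a) by ring, colIdx_neg]⟩

section Graph

variable (r m : ℕ)

lemma N_cast_eq : ((r * 3 ^ m : ℕ) : ℤ) = (r : ℤ) * 3 ^ m := by push_cast; ring

lemma stepVal_cast (p : ℕ × Bool) :
    ((iVal p : ℤ) : ZMod (r * 3 ^ m)) = stepVal (r * 3 ^ m) 3 p := by
  rcases p with ⟨i, b⟩
  cases b <;> simp [iVal, stepVal] <;> push_cast <;> ring

lemma iSum_cast (l : List (ℕ × Bool)) :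
    ((iSum l : ℤ) : ZMod (r * 3 ^ m)) = (l.map (stepVal (r * 3 ^ m) 3)).sum := by
  induction l with
  | nil => simp [iSum_nil]
  | cons p t ih =>
    rw [iSum_cons]
    push_cast
    rw [stepVal_cast r m p] at *
    simp [ih]

variable (hr : r = 1 ∨ r = 2) (hm : 1 ≤ m)
include hr hm

lemma Npos : 0 < r * 3 ^ m := by
  rcases hr with rfl | rfl <;> positivity

/-- `3^M - 1 < 2N` -/
lemma pow_M_lt : (3 : ℤ) ^ (m + (r - 1)) - 1 < 2 * ((r : ℤ) * 3 ^ m) := by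
  rcases hr with rfl | rfl
  · simp only [Nat.sub_self, add_zero, Nat.cast_one, one_mul]
    have : (0:ℤ) < 3 ^ m := by positivity
    linarith
  · have h1 : (3:ℤ) ^ (m + (2 - 1)) = 3 * 3 ^ m := by
      rw [show m + (2 - 1) = m + 1 from rfl, pow_succ]; ring
    have : (0:ℤ) < 3 ^ m := by positivity
    push_cast
    linarith

/-- sums of nonempty increasing step lists are nonzero in `ZMod N`. -/
lemma sum_steps_ne_zero (l : List (ℕ × Bool)) (hne : l ≠ [])
    (hpw : (l.map Prod.fst).Pairwise (· < ·))
    (hlt : ∀ p ∈ l, p.1 < m + (r - 1)) :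
    (l.map (stepVal (r * 3 ^ m) 3)).sum ≠ 0 := by
  rw [← iSum_cast]
  intro h0
  have hdvd : ((r * 3 ^ m : ℕ) : ℤ) ∣ iSum l := (ZMod.intCast_zmod_eq_zero_iff_dvd _ _).mp h0
  have hne0 : iSum l ≠ 0 := iSum_ne_zero l hne hpw
  have hle : ((r * 3 ^ m : ℕ) : ℤ) ≤ |iSum l| :=
    Int.le_of_dvd (abs_pos.mpr hne0) ((dvd_abs _ _).mpr hdvd)
  have habs : 2 * |iSum l| ≤ 3 ^ (m + (r - 1)) - 1 := two_mul_abs_iSum_le _ l hlt hpw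
  have hlt2 : (3:ℤ) ^ (m + (r - 1)) - 1 < 2 * ((r:ℤ) * 3 ^ m) := pow_M_lt r m hr hm
  rw [N_cast_eq] at hle
  linarith

/-- distinct powers `3^i`, `i < M`, are distinct and not mutually negative in `ZMod N`. -/
lemma pow_ne (i j : ℕ) (hij : j < i) (hi : i < m + (r - 1)) :
    ((3:ℕ) : ZMod (r * 3 ^ m)) ^ i ≠ ((3:ℕ) : ZMod (r * 3 ^ m)) ^ j ∧
    ((3:ℕ) : ZMod (r * 3 ^ m)) ^ i ≠ -((3:ℕ) : ZMod (r * 3 ^ m)) ^ j := by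
  have hpowlt : (3:ℤ) ^ i + 3 ^ j < (r : ℤ) * 3 ^ m := by
    have hj : (3:ℤ) ^ j < 3 ^ i := by
      apply pow_lt_pow_right₀ (by norm_num) hij
    have hi' : i ≤ m + (r - 1) - 1 := by omega
    have h2 : (3:ℤ) ^ i ≤ 3 ^ (m + (r - 1) - 1) := by
      apply pow_le_pow_right₀ (by norm_num) hi'
    have h3 : 2 * (3:ℤ) ^ (m + (r - 1) - 1) ≤ (r : ℤ) * 3 ^ m := by
      rcases hr with rfl | rfl
      · have : m + (1 - 1) - 1 = m - 1 := by omega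
        rw [this]
        have hm1 : m - 1 + 1 = m := by omega
        have : (3:ℤ) ^ m = 3 * 3 ^ (m - 1) := by
          rw [← pow_succ']
          rw [hm1]
        push_cast
        rw [this]
        have : (0:ℤ) < 3 ^ (m-1) := by positivity
        linarith
      · have : m + (2 - 1) - 1 = m := by omega
        rw [this]
        push_cast
        linarith
    linarith
  have hpos : (0:ℤ) < 3 ^ j := by positivity
  have hps : (3:ℤ) ^ j < 3 ^ i := pow_lt_pow_right₀ (by norm_num) hij
  constructor
  · intro h
    push_cast at h
    have hz : (((3:ℤ) ^ i - 3 ^ j : ℤ) : ZMod (r * 3 ^ m)) = 0 := by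
      push_cast
      rw [h]; ring
    have hdvd := (ZMod.intCast_zmod_eq_zero_iff_dvd _ _).mp hz
    rw [N_cast_eq] at hdvd
    have := Int.le_of_dvd (by linarith) hdvd
    linarith
  · intro h
    push_cast at h
    have hz : (((3:ℤ) ^ i + 3 ^ j : ℤ) : ZMod (r * 3 ^ m)) = 0 := by
      push_cast
      rw [h]; ring
    have hdvd := (ZMod.intCast_zmod_eq_zero_iff_dvd _ _).mp hz
    rw [N_cast_eq] at hdvd
    have := Int.le_of_dvd (by linarith) hdvd
    linarith

lemma stepVal_ne_zero {i : ℕ} (hi : i < m + (r - 1)) (b : Bool) :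
    stepVal (r * 3 ^ m) 3 (i, b) ≠ 0 := by
  have key : ((3:ℕ) : ZMod (r * 3 ^ m)) ^ i ≠ 0 := by
    intro h
    have hz : (((3:ℤ) ^ i : ℤ) : ZMod (r * 3 ^ m)) = 0 := by push_cast at h ⊢; exact h
    have hdvd := (ZMod.intCast_zmod_eq_zero_iff_dvd _ _).mp hz
    rw [N_cast_eq] at hdvd
    have hpos : (0:ℤ) < 3 ^ i := by positivity
    have hle := Int.le_of_dvd hpos hdvd
    -- 3^i < N
    have h2 : (3:ℤ) ^ i ≤ 3 ^ (m + (r - 1) - 1) := by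
      apply pow_le_pow_right₀ (by norm_num) (by omega)
    have h3 : 2 * (3:ℤ) ^ (m + (r - 1) - 1) ≤ (r : ℤ) * 3 ^ m := by
      rcases hr with rfl | rfl
      · have he : m + (1 - 1) - 1 = m - 1 := by omega
        rw [he]
        have : (3:ℤ) ^ m = 3 * 3 ^ (m - 1) := by
          rw [← pow_succ', show m - 1 + 1 = m by omega]
        push_cast
        rw [this]
        have : (0:ℤ) < 3 ^ (m-1) := by positivity
        linarith
      · have he : m + (2 - 1) - 1 = m := by omega
        rw [he]; push_cast; linarith
    have : (0:ℤ) < 3 ^ (m + (r - 1) - 1) := by positivity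
    linarith
  cases b <;> simp [stepVal] <;> exact key

lemma colIdx_stepVal {i : ℕ} (hi : i < m + (r - 1)) (b : Bool) :
    colIdx (r * 3 ^ m) (stepVal (r * 3 ^ m) 3 (i, b)) = i := by
  have key : ∀ x : ZMod (r * 3 ^ m),
      (x = ((3:ℕ) : ZMod (r * 3 ^ m)) ^ i ∨ x = -((3:ℕ) : ZMod (r * 3 ^ m)) ^ i) →
      colIdx (r * 3 ^ m) x = i := by
    intro x hxi
    unfold colIdx
    have hmem : i ∈ {j | x = ((3:ℕ) : ZMod (r * 3 ^ m)) ^ j ∨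
        x = -((3:ℕ) : ZMod (r * 3 ^ m)) ^ j} := hxi
    have hinf_le : sInf {j | x = ((3:ℕ) : ZMod (r * 3 ^ m)) ^ j ∨
        x = -((3:ℕ) : ZMod (r * 3 ^ m)) ^ j} ≤ i := Nat.sInf_le hmem
    have hinf_mem := Nat.sInf_mem (⟨i, hmem⟩ : Set.Nonempty {j | x = ((3:ℕ) : ZMod (r * 3 ^ m)) ^ j ∨
        x = -((3:ℕ) : ZMod (r * 3 ^ m)) ^ j})
    rcases lt_or_eq_of_le hinf_le with hlt | heq
    · exfalso
      have hij := pow_ne r m hr hm i _ hlt hi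
      rcases hxi with h1 | h1 <;> rcases hinf_mem with h2 | h2
      · exact hij.1 (h1.symm.trans h2)
      · exact hij.2 (h1.symm.trans h2)
      · exact hij.2 (by simpa using congrArg Neg.neg (h1.symm.trans h2))
      · exact hij.1 (neg_injective (h1.symm.trans h2))
    · exact heq
  cases b
  · exact key _ (Or.inr (by simp [stepVal]))
  · exact key _ (Or.inl (by simp [stepVal]))

lemma adj_step (u : ZMod (r * 3 ^ m)) {i : ℕ} (hi : i < m + (r - 1)) (b : Bool) :
    (recCirc (r * 3 ^ m) 3).Adj u (u + stepVal (r * 3 ^ m) 3 (i, b)) := by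
  unfold recCirc circulantGraph
  rw [fromRel_adj]
  constructor
  · intro h
    exact stepVal_ne_zero r m hr hm hi b (by
      have := congrArg (· - u) h
      simpa using this.symm)
  · have hv : (u + stepVal (r * 3 ^ m) 3 (i, b)) - u = stepVal (r * 3 ^ m) 3 (i, b) := by ring
    have hclog : i < Nat.clog 3 (r * 3 ^ m) := by rw [clog_eq r m hr]; exact hi
    cases b
    · refine Or.inl ?_
      have : u - (u + stepVal (r * 3 ^ m) 3 (i, false)) = ((3:ℕ) : ZMod (r * 3 ^ m)) ^ i := by
        simp [stepVal]
      exact ⟨i, hclog, this.symm ▸ rfl⟩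
    · refine Or.inr ?_
      have : (u + stepVal (r * 3 ^ m) 3 (i, true)) - u = ((3:ℕ) : ZMod (r * 3 ^ m)) ^ i := by
        simp [stepVal]
      exact ⟨i, hclog, this.symm ▸ rfl⟩

lemma col_step (u : ZMod (r * 3 ^ m)) {i : ℕ} (hi : i < m + (r - 1)) (b : Bool) :
    col (r * 3 ^ m) s(u, u + stepVal (r * 3 ^ m) 3 (i, b)) = i := by
  have h1 : col (r * 3 ^ m) s(u, u + stepVal (r * 3 ^ m) 3 (i, b))
      = colIdx (r * 3 ^ m) ((u + stepVal (r * 3 ^ m) 3 (i, b)) - u) := by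
    simp [col]
  rw [h1, show (u + stepVal (r * 3 ^ m) 3 (i, b)) - u = stepVal (r * 3 ^ m) 3 (i, b) by ring]
  exact colIdx_stepVal r m hr hm hi b

lemma col_lt (e : Sym2 (ZMod (r * 3 ^ m))) (he : e ∈ (recCirc (r * 3 ^ m) 3).edgeSet) :
    col (r * 3 ^ m) e < m + (r - 1) := by
  induction e with
  | _ u v =>
    rw [SimpleGraph.mem_edgeSet] at he
    unfold recCirc circulantGraph at he
    rw [fromRel_adj] at he
    obtain ⟨hne, h⟩ := he
    have hcol : col (r * 3 ^ m) s(u, v) = colIdx (r * 3 ^ m) (v - u) := by simp [col]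
    rw [hcol]
    rcases h with ⟨i, hclog, hx⟩ | ⟨i, hclog, hx⟩
    · have hmem : i ∈ {j | (v - u) = ((3:ℕ) : ZMod (r * 3 ^ m)) ^ j ∨
          (v - u) = -((3:ℕ) : ZMod (r * 3 ^ m)) ^ j} := by
        right
        rw [← hx]; ring
      have := Nat.sInf_le hmem
      rw [clog_eq r m hr] at hclog
      calc colIdx (r * 3 ^ m) (v - u) ≤ i := this
      _ < m + (r - 1) := hclog
    · have hmem : i ∈ {j | (v - u) = ((3:ℕ) : ZMod (r * 3 ^ m)) ^ j ∨
          (v - u) = -((3:ℕ) : ZMod (r * 3 ^ m)) ^ j} := Or.inl hx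
      have := Nat.sInf_le hmem
      rw [clog_eq r m hr] at hclog
      calc colIdx (r * 3 ^ m) (v - u) ≤ i := this
      _ < m + (r - 1) := hclog

lemma exists_path :
    ∀ (l : List (ℕ × Bool)), ((l.map Prod.fst).Pairwise (· < ·)) →
    (∀ p ∈ l, p.1 < m + (r - 1)) → ∀ u : ZMod (r * 3 ^ m),
    ∃ w : (recCirc (r * 3 ^ m) 3).Walk u (u + (l.map (stepVal (r * 3 ^ m) 3)).sum),
      w.IsPath ∧ w.length = l.length ∧
      w.edges.map (col (r * 3 ^ m)) = l.map Prod.fst ∧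
      ∀ x ∈ w.support, ∃ l', l' <+: l ∧ x = u + (l'.map (stepVal (r * 3 ^ m) 3)).sum := by
  intro l
  induction l with
  | nil =>
    intro _ _ u
    refine ⟨SimpleGraph.Walk.nil.copy rfl (by simp), ?_, ?_, ?_, ?_⟩
    · simp
    · simp
    · simp
    · intro x hx
      simp [SimpleGraph.Walk.support_copy] at hx
      exact ⟨[], List.nil_prefix, by simp [hx]⟩
  | cons p t ih =>
    intro hpw hlt u
    have hp1 : p.1 < m + (r - 1) := hlt p List.mem_cons_self
    have hpwt : (t.map Prod.fst).Pairwise (· < ·) := by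
      simp only [List.map_cons, List.pairwise_cons] at hpw
      exact hpw.2
    obtain ⟨w', hw'path, hw'len, hw'col, hw'supp⟩ :=
      ih hpwt (fun q hq => hlt q (List.mem_cons_of_mem _ hq)) (u + stepVal (r * 3 ^ m) 3 p)
    have hadj : (recCirc (r * 3 ^ m) 3).Adj u (u + stepVal (r * 3 ^ m) 3 p) := by
      have := adj_step r m hr hm u hp1 p.2
      simpa using this
    have hend : (u + stepVal (r * 3 ^ m) 3 p) + (t.map (stepVal (r * 3 ^ m) 3)).sum
        = u + ((p :: t).map (stepVal (r * 3 ^ m) 3)).sum := by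
      simp [add_assoc]
    refine ⟨((SimpleGraph.Walk.cons hadj w').copy rfl hend), ?_, ?_, ?_, ?_⟩
    · rw [SimpleGraph.Walk.isPath_copy]
      refine hw'path.cons ?_
      intro hu
      obtain ⟨l', hl', hx⟩ := hw'supp u hu
      have hsum : ((p :: l').map (stepVal (r * 3 ^ m) 3)).sum = 0 := by
        have : u + (stepVal (r * 3 ^ m) 3 p + (l'.map (stepVal (r * 3 ^ m) 3)).sum) = u + 0 := by
          rw [add_zero, ← add_assoc, ← hx]
        have := add_left_cancel this
        simpa using this
      have hpl'pw : ((p :: l').map Prod.fst).Pairwise (· < ·) := by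
        refine List.Pairwise.sublist ?_ hpw
        exact List.Sublist.map _ (List.Sublist.cons₂ _ hl'.sublist)
      have hpl'lt : ∀ q ∈ p :: l', q.1 < m + (r - 1) := by
        intro q hq
        rcases List.mem_cons.mp hq with rfl | hq'
        · exact hp1
        · exact hlt q (List.mem_cons_of_mem _ (hl'.subset hq'))
      exact sum_steps_ne_zero r m hr hm (p :: l') (by simp) hpl'pw hpl'lt hsum
    · simp [hw'len]
    · rw [SimpleGraph.Walk.edges_copy, SimpleGraph.Walk.edges_cons]
      simp only [List.map_cons, hw'col]
      congr 1
      have := col_step r m hr hm u hp1 p.2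
      simpa using this
    · intro x hx
      rw [SimpleGraph.Walk.support_copy, SimpleGraph.Walk.support_cons] at hx
      rcases List.mem_cons.mp hx with rfl | hx'
      · exact ⟨[], List.nil_prefix, by simp⟩
      · obtain ⟨l', hl', hxeq⟩ := hw'supp x hx'
        refine ⟨p :: l', List.cons_prefix_cons.mpr ⟨rfl, hl'⟩, ?_⟩
        rw [hxeq]
        simp [add_assoc]

lemma walk_rep {u v : ZMod (r * 3 ^ m)} (w : (recCirc (r * 3 ^ m) 3).Walk u v) :
    ∃ l : List (ℕ × Bool), (∀ p ∈ l, p.1 < m + (r - 1)) ∧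
      ((iSum l : ℤ) : ZMod (r * 3 ^ m)) = v - u ∧ l.length = w.length := by
  induction w with
  | nil => exact ⟨[], by simp, by simp [iSum_nil], by simp⟩
  | @cons a x c hadj q ih =>
    obtain ⟨l', hl'lt, hl'sum, hl'len⟩ := ih
    unfold recCirc circulantGraph at hadj
    rw [fromRel_adj] at hadj
    obtain ⟨-, h⟩ := hadj
    have : ∃ p : ℕ × Bool, p.1 < m + (r - 1) ∧
        stepVal (r * 3 ^ m) 3 p = x - a := by
      rcases h with ⟨i, hclog, hx⟩ | ⟨i, hclog, hx⟩
      · refine ⟨(i, false), by rw [clog_eq r m hr] at hclog; exact hclog, ?_⟩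
        have hs : stepVal (r * 3 ^ m) 3 (i, false) = -(((3:ℕ) : ZMod (r * 3 ^ m)) ^ i) := by
          simp [stepVal]
        rw [hs, ← hx]; ring
      · refine ⟨(i, true), by rw [clog_eq r m hr] at hclog; exact hclog, ?_⟩
        have hs : stepVal (r * 3 ^ m) 3 (i, true) = ((3:ℕ) : ZMod (r * 3 ^ m)) ^ i := by
          simp [stepVal]
        rw [hs, ← hx]
    obtain ⟨p, hplt, hpval⟩ := this
    refine ⟨p :: l', ?_, ?_, by simp [hl'len]; rfl⟩
    · intro q hq
      rcases List.mem_cons.mp hq with rfl | hq'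
      · exact hplt
      · exact hl'lt q hq'
    · rw [iSum_cons]
      push_cast
      rw [stepVal_cast r m p, hpval, hl'sum]
      ring
lemma cast_val_sub (u v : ZMod (r * 3 ^ m)) :
    ((((v - u).val : ℕ) : ℤ) : ZMod (r * 3 ^ m)) = v - u := by
  haveI : NeZero (r * 3 ^ m) := ⟨(Npos r m hr hm).ne'⟩
  push_cast
  exact ZMod.natCast_rightInverse (v - u)

lemma length_lower {u v : ZMod (r * 3 ^ m)} (w : (recCirc (r * 3 ^ m) 3).Walk u v) :
    bW r m (((v - u).val : ℕ) : ℤ) ≤ w.length := by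
  obtain ⟨l, hlt, hsum, hlen⟩ := walk_rep r m hr hm w
  rw [← hlen]
  apply bW_le_length r hr m l
  have h2 := cast_val_sub r m hr hm u v
  have : (((((v - u).val : ℕ) : ℤ) - iSum l : ℤ) : ZMod (r * 3 ^ m)) = 0 := by
    push_cast
    push_cast at h2 hsum
    rw [h2, hsum]
    ring
  have := (ZMod.intCast_zmod_eq_zero_iff_dvd _ _).mp this
  rw [N_cast_eq] at this
  exact this

lemma exists_canon (u v : ZMod (r * 3 ^ m)) :
    ∃ w : (recCirc (r * 3 ^ m) 3).Walk u v, w.IsPath ∧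
      w.length = bW r m (((v - u).val : ℕ) : ℤ) ∧
      (w.edges.map (col (r * 3 ^ m))).Nodup := by
  set y : ℤ := (((v - u).val : ℕ) : ℤ) with hy
  obtain ⟨w, hpath, hlen, hcol, -⟩ :=
    exists_path r m hr hm (bRep r m y) (bRep_pairwise r m y)
      (fun p hp => by have := bRep_fst_lt r hr m y p hp; omega) u
  have hsum : ((bRep r m y).map (stepVal (r * 3 ^ m) 3)).sum = v - u := by
    rw [← iSum_cast]
    have hdvd := bRep_sum r hr m y
    have hcongr : ((iSum (bRep r m y) : ℤ) : ZMod (r * 3 ^ m)) = ((y : ℤ) : ZMod (r * 3 ^ m)) := by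
      rw [ZMod.intCast_eq_intCast_iff]
      refine (Int.modEq_iff_dvd.mpr ?_).symm
      rw [N_cast_eq]
      exact hdvd
    rw [hcongr]
    exact cast_val_sub r m hr hm u v
  have hend : u + ((bRep r m y).map (stepVal (r * 3 ^ m) 3)).sum = v := by
    rw [hsum]; ring
  refine ⟨w.copy rfl hend, ?_, ?_, ?_⟩
  · simpa using hpath
  · simpa [bRep_length] using hlen
  · rw [SimpleGraph.Walk.edges_copy, hcol]
    exact (bRep_pairwise r m y).imp ne_of_lt

lemma dist_eq (u v : ZMod (r * 3 ^ m)) :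
    (recCirc (r * 3 ^ m) 3).dist u v = bW r m (((v - u).val : ℕ) : ℤ) := by
  obtain ⟨w, hp, hlen, -⟩ := exists_canon r m hr hm u v
  refine le_antisymm ?_ ?_
  · calc (recCirc (r * 3 ^ m) 3).dist u v ≤ w.length := SimpleGraph.dist_le w
    _ = _ := hlen
  · obtain ⟨q, hq⟩ := w.reachable.exists_walk_length_eq_dist
    calc bW r m (((v - u).val : ℕ) : ℤ) ≤ q.length := length_lower r m hr hm q
    _ = _ := hq

lemma upper : StrongRainbowConnected (recCirc (r * 3 ^ m) 3) (m + (r - 1)) := by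
  refine ⟨col (r * 3 ^ m), fun e he => col_lt r m hr hm e he, fun u v => ?_⟩
  obtain ⟨w, hp, hlen, hnd⟩ := exists_canon r m hr hm u v
  exact ⟨w, hp, by rw [hlen, dist_eq r m hr hm u v], hnd⟩

lemma lower_bound (k : ℕ) (hk : RainbowConnected (recCirc (r * 3 ^ m) 3) k) :
    m + (r - 1) ≤ k := by
  obtain ⟨c, hc, hpaths⟩ := hk
  obtain ⟨t₀, ht₀⟩ : ∃ t : ℕ, 3 ^ (m + (r - 1)) = 2 * t + 1 := by
    obtain ⟨t, ht⟩ := (Odd.pow (by decide : Odd 3) : Odd ((3:ℕ) ^ (m + (r - 1))))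
    exact ⟨t, by omega⟩
  obtain ⟨p, hp, hnd⟩ := hpaths 0 ((t₀ : ℕ) : ZMod (r * 3 ^ m))
  have h1 : p.length ≤ k := by
    have hlen : (p.edges.map c).length = p.length := by simp
    have hcard : (p.edges.map c).toFinset.card = (p.edges.map c).length :=
      List.toFinset_card_of_nodup hnd
    have hss : (p.edges.map c).toFinset ⊆ Finset.range k := by
      intro n hn
      rw [List.mem_toFinset] at hn
      obtain ⟨e, he, rfl⟩ := List.mem_map.mp hn
      exact Finset.mem_range.mpr (hc e (p.edges_subset_edgeSet he))
    have := Finset.card_le_card hss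
    rw [hcard, hlen, Finset.card_range] at this
    exact this
  have h2 := length_lower r m hr hm p
  have hval : ((((t₀ : ℕ) : ZMod (r * 3 ^ m)) - 0).val) = t₀ := by
    rw [sub_zero]
    apply ZMod.val_cast_of_lt
    rcases hr with rfl | rfl
    · have : (3:ℕ) ^ (m + (1 - 1)) = 3 ^ m := by norm_num
      rw [this] at ht₀
      omega
    · have : (3:ℕ) ^ (m + (2 - 1)) = 3 * 3 ^ m := by
        rw [show m + (2 - 1) = m + 1 from rfl, pow_succ]; ring
      rw [this] at ht₀
      omega
  rw [hval] at h2
  have h3 : bW r m ((t₀ : ℕ) : ℤ) = m + (r - 1) := by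
    rcases hr with rfl | rfl
    · apply bW_target1
      have hcast := congrArg (Nat.cast : ℕ → ℤ) ht₀
      rw [show m + (1 - 1) = m by omega] at hcast
      push_cast at hcast
      omega
    · apply bW_target2
      have hcast := congrArg (Nat.cast : ℕ → ℤ) ht₀
      rw [show m + (2 - 1) = m + 1 from rfl] at hcast
      push_cast at hcast
      omega
  omega

end Graph

end RcAux

/-- rc(G(r·3^m,3)) = src(G(r·3^m,3)) = m + ⌊r/2⌋ for r ∈ {1,2}. -/

theorem rc_src_recCirc_three (r m : ℕ) (hr : r = 1 ∨ r = 2) (hm : 1 ≤ m) :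
    rc (recCirc (r * 3 ^ m) 3) = m + r / 2 ∧
    src (recCirc (r * 3 ^ m) 3) = m + r / 2 := by
  have hK : m + r / 2 = m + (r - 1) := by rcases hr with rfl | rfl <;> norm_num
  have hup := RcAux.upper r m hr hm
  have hmem_r : RainbowConnected (recCirc (r * 3 ^ m) 3) (m + (r - 1)) := by
    obtain ⟨c, hc, h⟩ := hup
    exact ⟨c, hc, fun u v => by obtain ⟨p, h1, _, h3⟩ := h u v; exact ⟨p, h1, h3⟩⟩
  rw [hK]
  constructor
  · exact le_antisymm (Nat.sInf_le hmem_r)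
      (le_csInf ⟨_, hmem_r⟩ fun k hk => RcAux.lower_bound r m hr hm k hk)
  · refine le_antisymm (Nat.sInf_le hup)
      (le_csInf ⟨_, hup⟩ fun k hk => RcAux.lower_bound r m hr hm k ?_)
    obtain ⟨c, hc, h⟩ := hk
    exact ⟨c, hc, fun u v => by obtain ⟨p, h1, _, h3⟩ := h u v; exact ⟨p, h1, h3⟩⟩
end
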